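/- arXiv:1011.4774 — 4 statements merged into one kernel-verified Lean document; each statement's English description precedes it below -/
import Mathlib

section
/- Let Q : ℝ₊² → ℝ be C¹, q-homogeneous with q ≥ 2, and satisfy Q_s(0,1) = 0 and Q_t(1,0) = 0. Then the extension Q̃(s,t) := Q(s⁺, t⁺), where s⁺ = max(s,0), is a C¹ function on all of ℝ². -/
open Real Set Asymptotics Filter Topology

/-- If `Q` is `C¹` on the closed first quadrant, `q`-homogeneous with `q ≥ 2`, and
`Q_s(0,1) = 0`, `Q_t(1,0) = 0`, then the extension `Q̃(s,t) := Q(s⁺,t⁺)` is `C¹`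
on all of `ℝ²`. -/
theorem stmt_3 (Q : ℝ × ℝ → ℝ) (q : ℝ) (hq : 2 ≤ q)
    (hQreg : ContDiffOn ℝ 1 Q {z : ℝ × ℝ | 0 ≤ z.1 ∧ 0 ≤ z.2})
    (hhom : ∀ θ : ℝ, 0 < θ → ∀ s t : ℝ, 0 ≤ s → 0 ≤ t →
      Q (θ * s, θ * t) = θ ^ q * Q (s, t))
    (hQs : HasDerivWithinAt (fun s : ℝ => Q (s, 1)) 0 (Ici 0) 0)
    (hQt : HasDerivWithinAt (fun t : ℝ => Q (1, t)) 0 (Ici 0) 0) :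
    ContDiff ℝ 1 (fun z : ℝ × ℝ => Q (max z.1 0, max z.2 0)) := by
  set K : Set (ℝ × ℝ) := {z : ℝ × ℝ | 0 ≤ z.1 ∧ 0 ≤ z.2} with hKdef
  have hKprod : K = (Ici (0:ℝ)) ×ˢ (Ici (0:ℝ)) := by
    ext z; simp [hKdef, Set.mem_prod, Prod.le_def]
  have hKuniq : UniqueDiffOn ℝ K := by
    apply uniqueDiffOn_convex
    · rw [hKprod]; exact (convex_Ici 0).prod (convex_Ici 0)
    · rw [hKprod, interior_prod_eq, interior_Ici]
      exact ⟨(1, 1), by constructor <;> norm_num⟩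
  set g : ℝ × ℝ → ℝ × ℝ := fun z => (max z.1 0, max z.2 0) with hgdef
  have hgK : ∀ z, g z ∈ K := fun z => ⟨le_max_right _ _, le_max_right _ _⟩
  have hgcont : Continuous g := by
    exact (continuous_fst.max continuous_const).prodMk (continuous_snd.max continuous_const)
  have hglip : ∀ w z : ℝ × ℝ, ‖g w - g z‖ ≤ ‖w - z‖ := by
    intro w z
    rw [Prod.norm_def, Prod.norm_def]
    apply max_le_max
    · simpa [Real.norm_eq_abs] using abs_max_sub_max_le_abs w.1 z.1 0
    · simpa [Real.norm_eq_abs] using abs_max_sub_max_le_abs w.2 z.2 0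
  have hdiff : ∀ y ∈ K, HasFDerivWithinAt Q (fderivWithin ℝ Q K y) K y := fun y hy =>
    ((hQreg.differentiableOn one_ne_zero) y hy).hasFDerivWithinAt
  have hQ00 : Q (0, 0) = 0 := by
    have h := hhom 2 two_pos 0 0 le_rfl le_rfl
    have h2 : (1:ℝ) < (2:ℝ) ^ q := by
      have := Real.rpow_lt_rpow_of_exponent_lt (x := 2) one_lt_two
        (by linarith : (0:ℝ) < q)
      simpa using this
    have h' : Q ((0:ℝ), (0:ℝ)) = 2 ^ q * Q (0, 0) := by simpa using h
    nlinarith [h', h2]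
  -- key lemma in the s-direction
  have key1 : ∀ t : ℝ, 0 ≤ t → fderivWithin ℝ Q K ((0:ℝ), t) ((1:ℝ), (0:ℝ)) = 0 := by
    intro t ht
    have hmem : ((0:ℝ), t) ∈ K := ⟨le_rfl, ht⟩
    have hpath : HasDerivWithinAt (fun r : ℝ => ((r, t) : ℝ × ℝ)) (1, 0) (Ici 0) 0 :=
      ((hasDerivAt_id (0:ℝ)).prodMk (hasDerivAt_const 0 t)).hasDerivWithinAt
    have hcomp : HasDerivWithinAt (fun r : ℝ => Q (r, t))
        (fderivWithin ℝ Q K ((0:ℝ), t) (1, 0)) (Ici 0) 0 := by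
      have := (hdiff _ hmem).comp_hasDerivWithinAt (0:ℝ) hpath
        (fun r hr => (⟨hr, ht⟩ : ((r, t) : ℝ × ℝ) ∈ K))
      exact this
    have hzero : HasDerivWithinAt (fun r : ℝ => Q (r, t)) 0 (Ici 0) 0 := by
      rcases eq_or_lt_of_le ht with h0 | hpos
      · -- t = 0 : Q (r, 0) = r ^ q * Q (1,0)
        subst h0
        have hc : HasDerivAt (fun r : ℝ => r ^ q * Q (1, 0))
            (q * (0:ℝ) ^ (q - 1) * Q (1, 0)) 0 :=
          (Real.hasDerivAt_rpow_const (Or.inr (by linarith))).mul_const _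
        have hc0 : q * (0:ℝ) ^ (q - 1) * Q (1, 0) = 0 := by
          rw [Real.zero_rpow (by linarith : q - 1 ≠ 0)]; ring
        rw [hc0] at hc
        refine hc.hasDerivWithinAt.congr ?_ ?_
        · intro r hr
          rcases eq_or_lt_of_le (Set.mem_Ici.mp hr : (0:ℝ) ≤ r) with h0 | hrpos
          · rw [← h0, hQ00, Real.zero_rpow (by linarith : q ≠ 0)]; ring
          · have := hhom r hrpos 1 0 zero_le_one le_rfl
            simpa using this
        · simpa [Real.zero_rpow (show q ≠ 0 by linarith)] using hQ00
      · -- t > 0 : Q (r, t) = t ^ q * Q (r / t, 1)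
        have htne : t ≠ 0 := ne_of_gt hpos
        have hdiv : HasDerivWithinAt (fun r : ℝ => r / t) t⁻¹ (Ici 0) 0 := by
          simpa using ((hasDerivAt_id (0:ℝ)).div_const t).hasDerivWithinAt
        have h1 : HasDerivWithinAt (fun r : ℝ => Q (r / t, 1)) (0 * t⁻¹) (Ici 0) 0 := by
          have := HasDerivWithinAt.comp_of_eq (0:ℝ) hQs hdiv
            (fun r hr => div_nonneg hr (le_of_lt hpos)) (by simp)
          exact this
        have h2 : HasDerivWithinAt (fun r : ℝ => t ^ q * Q (r / t, 1))
            (t ^ q * (0 * t⁻¹)) (Ici 0) 0 := h1.const_mul _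
        have h3 : t ^ q * ((0:ℝ) * t⁻¹) = 0 := by ring
        rw [h3] at h2
        refine h2.congr ?_ ?_
        · intro r hr
          have := hhom t hpos (r / t) 1 (div_nonneg hr (le_of_lt hpos)) zero_le_one
          rw [mul_div_cancel₀ r htne, mul_one] at this
          exact this
        · have := hhom t hpos 0 1 le_rfl zero_le_one
          simpa using this
    have h1 := hcomp.derivWithin (uniqueDiffOn_Ici (0:ℝ) 0 self_mem_Ici)
    have h2 := hzero.derivWithin (uniqueDiffOn_Ici (0:ℝ) 0 self_mem_Ici)
    rw [h1] at h2; exact h2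
  -- key lemma in the t-direction (mirror image)
  have key2 : ∀ s : ℝ, 0 ≤ s → fderivWithin ℝ Q K (s, (0:ℝ)) ((0:ℝ), (1:ℝ)) = 0 := by
    intro s hs
    have hmem : (s, (0:ℝ)) ∈ K := ⟨hs, le_rfl⟩
    have hpath : HasDerivWithinAt (fun r : ℝ => ((s, r) : ℝ × ℝ)) (0, 1) (Ici 0) 0 :=
      ((hasDerivAt_const (0:ℝ) s).prodMk (hasDerivAt_id 0)).hasDerivWithinAt
    have hcomp : HasDerivWithinAt (fun r : ℝ => Q (s, r))
        (fderivWithin ℝ Q K (s, (0:ℝ)) (0, 1)) (Ici 0) 0 := by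
      have := (hdiff _ hmem).comp_hasDerivWithinAt (0:ℝ) hpath
        (fun r hr => ⟨hs, hr⟩)
      exact this
    have hzero : HasDerivWithinAt (fun r : ℝ => Q (s, r)) 0 (Ici 0) 0 := by
      rcases eq_or_lt_of_le hs with h0 | hpos
      · subst h0
        have hc : HasDerivAt (fun r : ℝ => r ^ q * Q (0, 1))
            (q * (0:ℝ) ^ (q - 1) * Q (0, 1)) 0 :=
          (Real.hasDerivAt_rpow_const (Or.inr (by linarith))).mul_const _
        have hc0 : q * (0:ℝ) ^ (q - 1) * Q (0, 1) = 0 := by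
          rw [Real.zero_rpow (by linarith : q - 1 ≠ 0)]; ring
        rw [hc0] at hc
        refine hc.hasDerivWithinAt.congr ?_ ?_
        · intro r hr
          rcases eq_or_lt_of_le (Set.mem_Ici.mp hr : (0:ℝ) ≤ r) with h0 | hrpos
          · rw [← h0, hQ00, Real.zero_rpow (by linarith : q ≠ 0)]; ring
          · have := hhom r hrpos 0 1 le_rfl zero_le_one
            simpa using this
        · simpa [Real.zero_rpow (show q ≠ 0 by linarith)] using hQ00
      · have hsne : s ≠ 0 := ne_of_gt hpos
        have hdiv : HasDerivWithinAt (fun r : ℝ => r / s) s⁻¹ (Ici 0) 0 := by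
          simpa using ((hasDerivAt_id (0:ℝ)).div_const s).hasDerivWithinAt
        have h1 : HasDerivWithinAt (fun r : ℝ => Q (1, r / s)) (0 * s⁻¹) (Ici 0) 0 := by
          have := HasDerivWithinAt.comp_of_eq (0:ℝ) hQt hdiv
            (fun r hr => div_nonneg hr (le_of_lt hpos)) (by simp)
          exact this
        have h2 : HasDerivWithinAt (fun r : ℝ => s ^ q * Q (1, r / s))
            (s ^ q * (0 * s⁻¹)) (Ici 0) 0 := h1.const_mul _
        have h3 : s ^ q * ((0:ℝ) * s⁻¹) = 0 := by ring
        rw [h3] at h2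
        refine h2.congr ?_ ?_
        · intro r hr
          have := hhom s hpos 1 (r / s) zero_le_one (div_nonneg hr (le_of_lt hpos))
          rw [mul_div_cancel₀ r hsne, mul_one] at this
          exact this
        · have := hhom s hpos 1 0 zero_le_one le_rfl
          simpa using this
    have h1 := hcomp.derivWithin (uniqueDiffOn_Ici (0:ℝ) 0 self_mem_Ici)
    have h2 := hzero.derivWithin (uniqueDiffOn_Ici (0:ℝ) 0 self_mem_Ici)
    rw [h1] at h2; exact h2
  -- the main derivative claim
  have hFderiv : ∀ z : ℝ × ℝ,
      HasFDerivAt (fun z => Q (g z)) (fderivWithin ℝ Q K (g z)) z := by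
    intro z
    set F : (ℝ × ℝ) →L[ℝ] ℝ := fderivWithin ℝ Q K (g z) with hFdef
    have hy := hgK z
    have h1 : HasFDerivWithinAt Q F K (g z) := hdiff _ hy
    have hg_tendsto : Tendsto g (𝓝 z) (𝓝[K] (g z)) := by
      rw [tendsto_nhdsWithin_iff]
      exact ⟨hgcont.continuousAt, Eventually.of_forall hgK⟩
    have hO1 : (fun w => Q (g w) - Q (g z) - F (g w - g z)) =o[𝓝 z] fun w => g w - g z :=
      h1.isLittleO.comp_tendsto hg_tendsto
    have hO2 : (fun w => g w - g z) =O[𝓝 z] fun w => w - z :=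
      IsBigO.of_bound 1 (Eventually.of_forall fun w => by
        simpa using hglip w z)
    have main1 : (fun w => Q (g w) - Q (g z) - F (g w - g z)) =o[𝓝 z] fun w => w - z :=
      hO1.trans_isBigO hO2
    have hsplit : ∀ v : ℝ × ℝ, F v = v.1 * F (1, 0) + v.2 * F (0, 1) := by
      intro v
      have hv : v = v.1 • ((1:ℝ), (0:ℝ)) + v.2 • ((0:ℝ), (1:ℝ)) := by
        ext <;> simp
      conv_lhs => rw [hv]
      rw [map_add, map_smul, map_smul]
      simp [smul_eq_mul]
    have ev1 : ∀ᶠ w : ℝ × ℝ in 𝓝 z,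
        (max w.1 0 - max z.1 0 - (w.1 - z.1)) * F (1, 0) = 0 := by
      rcases lt_or_ge 0 z.1 with h | h
      · have hset : {w : ℝ × ℝ | 0 < w.1} ∈ 𝓝 z :=
          (isOpen_lt continuous_const continuous_fst).mem_nhds h
        filter_upwards [hset] with w hw
        rw [max_eq_left (le_of_lt hw), max_eq_left (le_of_lt h)]
        ring
      · have hF0 : F (1, 0) = 0 := by
          have hgz : g z = ((0:ℝ), max z.2 0) := by
            simp [hgdef, max_eq_right h]
          rw [hFdef, hgz]
          exact key1 _ (le_max_right _ _)
        filter_upwards with w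
        rw [hF0]; ring
    have ev2 : ∀ᶠ w : ℝ × ℝ in 𝓝 z,
        (max w.2 0 - max z.2 0 - (w.2 - z.2)) * F (0, 1) = 0 := by
      rcases lt_or_ge 0 z.2 with h | h
      · have hset : {w : ℝ × ℝ | 0 < w.2} ∈ 𝓝 z :=
          (isOpen_lt continuous_const continuous_snd).mem_nhds h
        filter_upwards [hset] with w hw
        rw [max_eq_left (le_of_lt hw), max_eq_left (le_of_lt h)]
        ring
      · have hF0 : F (0, 1) = 0 := by
          have hgz : g z = (max z.1 0, (0:ℝ)) := by
            simp [hgdef, max_eq_right h]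
          rw [hFdef, hgz]
          exact key2 _ (le_max_right _ _)
        filter_upwards with w
        rw [hF0]; ring
    have main2 : (fun w => F (g w - g z) - F (w - z)) =o[𝓝 z] fun w => w - z := by
      have hev : (fun w => F (g w - g z) - F (w - z)) =ᶠ[𝓝 z] fun _ => (0:ℝ) := by
        filter_upwards [ev1, ev2] with w h1w h2w
        have hm : F (g w - g z) - F (w - z) = F (g w - g z - (w - z)) :=
          (map_sub F _ _).symm
        rw [hm, hsplit]
        have e1 : (g w - g z - (w - z)).1 = max w.1 0 - max z.1 0 - (w.1 - z.1) := rfl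
        have e2 : (g w - g z - (w - z)).2 = max w.2 0 - max z.2 0 - (w.2 - z.2) := rfl
        rw [e1, e2, h1w, h2w, add_zero]
      exact (isLittleO_zero _ _).congr' hev.symm EventuallyEq.rfl
    have main : (fun w => Q (g w) - Q (g z) - F (w - z)) =o[𝓝 z] fun w => w - z := by
      have := main1.add main2
      refine this.congr' (Eventually.of_forall fun w => by ring) EventuallyEq.rfl
    exact HasFDerivAt.of_isLittleO main
  show ContDiff ℝ 1 (fun z : ℝ × ℝ => Q (g z))
  rw [contDiff_one_iff_fderiv]
  constructor
  · exact fun z => (hFderiv z).differentiableAt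
  · have heq : (fderiv ℝ fun z : ℝ × ℝ => Q (g z)) = fun z => fderivWithin ℝ Q K (g z) :=
      funext fun z => (hFderiv z).fderiv
    rw [heq]
    exact (hQreg.continuousOn_fderivWithin hKuniq le_rfl).comp_continuous hgcont hgK
end

section
/- Let Q : ℝ₊² → ℝ be C¹ and q-homogeneous with q > 2. Then the extension Q̃(s,t) := Q(s⁺,t⁺) − ∇Q(s⁺,t⁺)·(s⁻,t⁻), where s⁻ = max(−s,0), is a C¹ function on ℝ², and moreover Q̃_s(s,t) ≥ 0 whenever s ≤ 0 and Q_s ≥ 0 on ℝ₊², and similarly Q̃_t(s,t) ≥ 0 whenever t ≤ 0 and Q_t ≥ 0 on ℝ₊². -/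
open Real Set

open Filter Asymptotics Topology

noncomputable section Stmt4Aux

def PS : Set (ℝ × ℝ) := {z : ℝ × ℝ | 0 ≤ z.1 ∧ 0 ≤ z.2}

lemma PS_eq : PS = Set.Ici (0:ℝ) ×ˢ Set.Ici (0:ℝ) := by
  ext z; simp only [PS, Set.mem_setOf_eq, Set.mem_prod, Set.mem_Ici]

lemma PS_ud : UniqueDiffOn ℝ PS := by
  rw [PS_eq]; exact (uniqueDiffOn_Ici 0).prod (uniqueDiffOn_Ici 0)

lemma mem_PS {z : ℝ × ℝ} (h1 : 0 ≤ z.1) (h2 : 0 ≤ z.2) : z ∈ PS := ⟨h1, h2⟩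

variable {Q : ℝ × ℝ → ℝ} {q : ℝ}

lemma hD (hQreg : ContDiffOn ℝ 1 Q PS) :
    ∀ z ∈ PS, HasFDerivWithinAt Q (fderivWithin ℝ Q PS z) PS z :=
  fun z hz => ((hQreg.differentiableOn one_ne_zero) z hz).hasFDerivWithinAt

lemma hDhom (hQreg : ContDiffOn ℝ 1 Q PS)
    (hhom : ∀ θ : ℝ, 0 < θ → ∀ s t : ℝ, 0 ≤ s → 0 ≤ t →
      Q (θ * s, θ * t) = θ ^ q * Q (s, t)) :
    ∀ θ : ℝ, 0 < θ → ∀ z ∈ PS,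
      fderivWithin ℝ Q PS (θ • z) = θ ^ (q-1) • fderivWithin ℝ Q PS z := by
  intro θ hθ z hz
  have hmem : θ • z ∈ PS := ⟨mul_nonneg hθ.le hz.1, mul_nonneg hθ.le hz.2⟩
  have hL : HasFDerivWithinAt (fun w : ℝ×ℝ => θ • w)
      (θ • ContinuousLinearMap.id ℝ (ℝ×ℝ)) PS z := by
    exact (θ • ContinuousLinearMap.id ℝ (ℝ×ℝ)).hasFDerivWithinAt (s := PS) (x := z)
  have hmaps : MapsTo (fun w : ℝ×ℝ => θ • w) PS PS :=
    fun w hw => ⟨mul_nonneg hθ.le hw.1, mul_nonneg hθ.le hw.2⟩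
  have h1 : HasFDerivWithinAt (fun w => Q (θ • w))
      ((fderivWithin ℝ Q PS (θ • z)).comp (θ • ContinuousLinearMap.id ℝ (ℝ×ℝ))) PS z :=
    (hD hQreg _ hmem).comp z hL hmaps
  have h2 : HasFDerivWithinAt (fun w => Q (θ • w)) (θ ^ q • fderivWithin ℝ Q PS z) PS z := by
    refine ((hD hQreg z hz).const_smul (θ ^ q)).congr (fun w hw => ?_) ?_
    · have := hhom θ hθ w.1 w.2 hw.1 hw.2
      simpa [Prod.smul_def, smul_eq_mul] using this
    · have := hhom θ hθ z.1 z.2 hz.1 hz.2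
      simpa [Prod.smul_def, smul_eq_mul] using this
  have heq := (PS_ud z hz).eq h1 h2
  refine ContinuousLinearMap.ext fun u => ?_
  have h3 : fderivWithin ℝ Q PS (θ • z) (θ • u) = θ ^ q * fderivWithin ℝ Q PS z u := by
    have := congrFun (congrArg (fun (L : ℝ×ℝ →L[ℝ] ℝ) => (L : ℝ×ℝ → ℝ)) heq) u
    simpa using this
  have hsm : fderivWithin ℝ Q PS (θ • z) (θ • u) = θ * fderivWithin ℝ Q PS (θ • z) u := by
    rw [map_smul]; simp [smul_eq_mul]
  have hpow : θ ^ q = θ * θ ^ (q-1) := by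
    rw [Real.rpow_sub hθ, Real.rpow_one]; field_simp
  rw [hsm, hpow, mul_assoc] at h3
  have := mul_left_cancel₀ hθ.ne' h3
  simpa [smul_eq_mul] using this

lemma hQ00 (hq : 2 < q)
    (hhom : ∀ θ : ℝ, 0 < θ → ∀ s t : ℝ, 0 ≤ s → 0 ≤ t →
      Q (θ * s, θ * t) = θ ^ q * Q (s, t)) : Q (0,0) = 0 := by
  have h := hhom 2 (by norm_num) 0 0 le_rfl le_rfl
  simp only [mul_zero] at h
  have h2 : (1:ℝ) < 2 ^ q :=
    (Real.one_lt_rpow_iff_of_pos (by norm_num)).mpr (Or.inl ⟨one_lt_two, by linarith⟩)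
  nlinarith [h, h2]

lemma hD00 (hq : 2 < q) (hQreg : ContDiffOn ℝ 1 Q PS)
    (hhom : ∀ θ : ℝ, 0 < θ → ∀ s t : ℝ, 0 ≤ s → 0 ≤ t →
      Q (θ * s, θ * t) = θ ^ q * Q (s, t)) :
    fderivWithin ℝ Q PS ((0:ℝ),(0:ℝ)) = 0 := by
  have h := hDhom hQreg hhom 2 (by norm_num) ((0:ℝ),(0:ℝ)) ⟨le_rfl, le_rfl⟩
  simp only [Prod.smul_mk, smul_eq_mul, mul_zero] at h
  have hne : (2:ℝ) ^ (q-1) ≠ 1 := by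
    have : (1:ℝ) < 2 ^ (q-1) :=
      (Real.one_lt_rpow_iff_of_pos (by norm_num)).mpr (Or.inl ⟨one_lt_two, by linarith⟩)
    linarith
  have h2 : ((1:ℝ) - 2 ^ (q-1)) • fderivWithin ℝ Q PS ((0:ℝ),(0:ℝ)) = 0 := by
    refine ContinuousLinearMap.ext fun u => ?_
    have := congrArg (fun L : ℝ×ℝ →L[ℝ] ℝ => L u) h
    simp only [ContinuousLinearMap.smul_apply, smul_eq_mul, ContinuousLinearMap.zero_apply] at this ⊢
    linear_combination this
  rcases smul_eq_zero.mp h2 with h3 | h3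
  · exact absurd (by linarith [sub_eq_zero.mp h3] : (2:ℝ)^(q-1) = 1) hne
  · exact h3

lemma hDax1 (hq : 2 < q) (hQreg : ContDiffOn ℝ 1 Q PS)
    (hhom : ∀ θ : ℝ, 0 < θ → ∀ s t : ℝ, 0 ≤ s → 0 ≤ t →
      Q (θ * s, θ * t) = θ ^ q * Q (s, t)) :
    ∀ t : ℝ, 0 ≤ t → fderivWithin ℝ Q PS (0,t) = t ^ (q-1) • fderivWithin ℝ Q PS (0,1) := by
  intro t ht
  rcases eq_or_lt_of_le ht with rfl | ht
  · rw [hD00 hq hQreg hhom, Real.zero_rpow (by linarith : q - 1 ≠ 0), zero_smul]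
  · have h := hDhom hQreg hhom t ht ((0:ℝ),(1:ℝ)) ⟨le_rfl, zero_le_one⟩
    simpa using h

lemma hDax2 (hq : 2 < q) (hQreg : ContDiffOn ℝ 1 Q PS)
    (hhom : ∀ θ : ℝ, 0 < θ → ∀ s t : ℝ, 0 ≤ s → 0 ≤ t →
      Q (θ * s, θ * t) = θ ^ q * Q (s, t)) :
    ∀ s : ℝ, 0 ≤ s → fderivWithin ℝ Q PS (s,0) = s ^ (q-1) • fderivWithin ℝ Q PS (1,0) := by
  intro s hs
  rcases eq_or_lt_of_le hs with rfl | hs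
  · rw [hD00 hq hQreg hhom, Real.zero_rpow (by linarith : q - 1 ≠ 0), zero_smul]
  · have h := hDhom hQreg hhom s hs ((1:ℝ),(0:ℝ)) ⟨zero_le_one, le_rfl⟩
    simpa using h

lemma hQax1 (hq : 2 < q)
    (hhom : ∀ θ : ℝ, 0 < θ → ∀ s t : ℝ, 0 ≤ s → 0 ≤ t →
      Q (θ * s, θ * t) = θ ^ q * Q (s, t)) :
    ∀ t : ℝ, 0 ≤ t → Q (0,t) = t ^ q * Q (0,1) := by
  intro t ht
  rcases eq_or_lt_of_le ht with rfl | ht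
  · rw [hQ00 hq hhom, Real.zero_rpow (by linarith : q ≠ 0), zero_mul]
  · have h := hhom t ht 0 1 le_rfl zero_le_one
    simpa using h

lemma hQax2 (hq : 2 < q)
    (hhom : ∀ θ : ℝ, 0 < θ → ∀ s t : ℝ, 0 ≤ s → 0 ≤ t →
      Q (θ * s, θ * t) = θ ^ q * Q (s, t)) :
    ∀ s : ℝ, 0 ≤ s → Q (s,0) = s ^ q * Q (1,0) := by
  intro s hs
  rcases eq_or_lt_of_le hs with rfl | hs
  · rw [hQ00 hq hhom, Real.zero_rpow (by linarith : q ≠ 0), zero_mul]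
  · have h := hhom s hs 1 0 zero_le_one le_rfl
    simpa using h

lemma hEuler1 (hq : 2 < q) (hQreg : ContDiffOn ℝ 1 Q PS)
    (hhom : ∀ θ : ℝ, 0 < θ → ∀ s t : ℝ, 0 ≤ s → 0 ≤ t →
      Q (θ * s, θ * t) = θ ^ q * Q (s, t)) :
    fderivWithin ℝ Q PS ((0:ℝ),(1:ℝ)) ((0:ℝ),(1:ℝ)) = q * Q (0,1) := by
  have hcomp : HasDerivAt (fun τ : ℝ => Q (0, τ))
      ((fderivWithin ℝ Q PS ((0:ℝ),(1:ℝ))) ((0:ℝ),(1:ℝ))) 1 := by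
    have hγ : HasDerivWithinAt (fun τ : ℝ => ((0:ℝ), τ)) (((0:ℝ),(1:ℝ))) (Ioi 0) 1 :=
      ((hasDerivAt_const (1:ℝ) (0:ℝ)).prodMk (hasDerivAt_id 1)).hasDerivWithinAt
    have hmaps : MapsTo (fun τ : ℝ => ((0:ℝ), τ)) (Ioi 0) PS :=
      fun τ hτ => ⟨le_rfl, le_of_lt hτ⟩
    have h := (hD hQreg ((0:ℝ),(1:ℝ)) ⟨le_rfl, zero_le_one⟩).comp_hasDerivWithinAt 1 hγ hmaps
    exact h.hasDerivAt (Ioi_mem_nhds one_pos)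
  have h2 : HasDerivAt (fun τ : ℝ => τ ^ q * Q (0,1)) (q * Q (0,1)) 1 := by
    have := (Real.hasDerivAt_rpow_const (x := (1:ℝ)) (p := q)
      (Or.inl one_ne_zero)).mul_const (Q (0,1))
    simpa using this
  have h3 : HasDerivAt (fun τ : ℝ => Q (0, τ)) (q * Q (0,1)) 1 := by
    refine h2.congr_of_eventuallyEq ?_
    filter_upwards [Ioi_mem_nhds (by norm_num : (0:ℝ) < 1)] with τ hτ
    exact hQax1 hq hhom τ hτ.le
  exact hcomp.unique h3

lemma hEuler2 (hq : 2 < q) (hQreg : ContDiffOn ℝ 1 Q PS)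
    (hhom : ∀ θ : ℝ, 0 < θ → ∀ s t : ℝ, 0 ≤ s → 0 ≤ t →
      Q (θ * s, θ * t) = θ ^ q * Q (s, t)) :
    fderivWithin ℝ Q PS ((1:ℝ),(0:ℝ)) ((1:ℝ),(0:ℝ)) = q * Q (1,0) := by
  have hcomp : HasDerivAt (fun τ : ℝ => Q (τ, 0))
      ((fderivWithin ℝ Q PS ((1:ℝ),(0:ℝ))) ((1:ℝ),(0:ℝ))) 1 := by
    have hγ : HasDerivWithinAt (fun τ : ℝ => (τ, (0:ℝ))) (((1:ℝ),(0:ℝ))) (Ioi 0) 1 :=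
      ((hasDerivAt_id (1:ℝ)).prodMk (hasDerivAt_const (1:ℝ) (0:ℝ))).hasDerivWithinAt
    have hmaps : MapsTo (fun τ : ℝ => (τ, (0:ℝ))) (Ioi 0) PS :=
      fun τ hτ => ⟨le_of_lt hτ, le_rfl⟩
    have h := (hD hQreg ((1:ℝ),(0:ℝ)) ⟨zero_le_one, le_rfl⟩).comp_hasDerivWithinAt 1 hγ hmaps
    exact h.hasDerivAt (Ioi_mem_nhds one_pos)
  have h2 : HasDerivAt (fun τ : ℝ => τ ^ q * Q (1,0)) (q * Q (1,0)) 1 := by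
    have := (Real.hasDerivAt_rpow_const (x := (1:ℝ)) (p := q)
      (Or.inl one_ne_zero)).mul_const (Q (1,0))
    simpa using this
  have h3 : HasDerivAt (fun τ : ℝ => Q (τ, 0)) (q * Q (1,0)) 1 := by
    refine h2.congr_of_eventuallyEq ?_
    filter_upwards [Ioi_mem_nhds (by norm_num : (0:ℝ) < 1)] with τ hτ
    exact hQax2 hq hhom τ hτ.le
  exact hcomp.unique h3

def Qe (Q : ℝ × ℝ → ℝ) : ℝ × ℝ → ℝ := fun z =>
  Q (max z.1 0, max z.2 0)
    - fderivWithin ℝ Q PS (max z.1 0, max z.2 0) (max (-z.1) 0, max (-z.2) 0)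

def Fd (Q : ℝ × ℝ → ℝ) (q : ℝ) : ℝ × ℝ → (ℝ × ℝ →L[ℝ] ℝ) := fun z =>
  fderivWithin ℝ Q PS (max z.1 0, max z.2 0)
  - (max (-z.1) 0 * fderivWithin ℝ Q PS (0,1) (1,0) * (q-1) * (max z.2 0) ^ (q-2))
      • ContinuousLinearMap.snd ℝ ℝ ℝ
  - (max (-z.2) 0 * fderivWithin ℝ Q PS (1,0) (0,1) * (q-1) * (max z.1 0) ^ (q-2))
      • ContinuousLinearMap.fst ℝ ℝ ℝ

lemma Qe_pos {z : ℝ × ℝ} (h1 : 0 ≤ z.1) (h2 : 0 ≤ z.2) : Qe Q z = Q z := by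
  simp [Qe, max_eq_left h1, max_eq_left h2, Prod.mk_zero_zero,
    max_eq_right (neg_nonpos.mpr h1), max_eq_right (neg_nonpos.mpr h2)]

lemma Qe_b (hq : 2 < q) (hQreg : ContDiffOn ℝ 1 Q PS)
    (hhom : ∀ θ : ℝ, 0 < θ → ∀ s t : ℝ, 0 ≤ s → 0 ≤ t →
      Q (θ * s, θ * t) = θ ^ q * Q (s, t))
    {z : ℝ × ℝ} (h1 : z.1 ≤ 0) (h2 : 0 ≤ z.2) :
    Qe Q z = z.2 ^ q * Q (0,1)
      + z.1 * z.2 ^ (q-1) * fderivWithin ℝ Q PS ((0:ℝ),(1:ℝ)) ((1:ℝ),(0:ℝ)) := by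
  have hx : max z.1 0 = 0 := max_eq_right h1
  have hy : max (-z.2) 0 = 0 := max_eq_right (neg_nonpos.mpr h2)
  have hvec : ((max (-z.1) 0 : ℝ), (0:ℝ)) = (max (-z.1) 0) • ((1:ℝ),(0:ℝ)) := by
    simp [Prod.smul_def]
  rw [Qe, hx, hy, max_eq_left h2, hQax1 hq hhom z.2 h2, hDax1 hq hQreg hhom z.2 h2, hvec]
  rw [max_eq_left (neg_nonneg.mpr h1)]
  simp only [ContinuousLinearMap.smul_apply, map_smul, smul_eq_mul]
  ring

lemma Qe_d (hq : 2 < q) (hQreg : ContDiffOn ℝ 1 Q PS)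
    (hhom : ∀ θ : ℝ, 0 < θ → ∀ s t : ℝ, 0 ≤ s → 0 ≤ t →
      Q (θ * s, θ * t) = θ ^ q * Q (s, t))
    {z : ℝ × ℝ} (h1 : 0 ≤ z.1) (h2 : z.2 ≤ 0) :
    Qe Q z = z.1 ^ q * Q (1,0)
      + z.2 * z.1 ^ (q-1) * fderivWithin ℝ Q PS ((1:ℝ),(0:ℝ)) ((0:ℝ),(1:ℝ)) := by
  have hy : max z.2 0 = 0 := max_eq_right h2
  have hx : max (-z.1) 0 = 0 := max_eq_right (neg_nonpos.mpr h1)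
  have hvec : ((0:ℝ), (max (-z.2) 0 : ℝ)) = (max (-z.2) 0) • ((0:ℝ),(1:ℝ)) := by
    simp [Prod.smul_def]
  rw [Qe, hx, hy, max_eq_left h1, hQax2 hq hhom z.1 h1, hDax2 hq hQreg hhom z.1 h1, hvec]
  rw [max_eq_left (neg_nonneg.mpr h2)]
  simp only [ContinuousLinearMap.smul_apply, map_smul, smul_eq_mul]
  ring

lemma Qe_c (hq : 2 < q) (hQreg : ContDiffOn ℝ 1 Q PS)
    (hhom : ∀ θ : ℝ, 0 < θ → ∀ s t : ℝ, 0 ≤ s → 0 ≤ t →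
      Q (θ * s, θ * t) = θ ^ q * Q (s, t))
    {z : ℝ × ℝ} (h1 : z.1 ≤ 0) (h2 : z.2 ≤ 0) : Qe Q z = 0 := by
  rw [Qe, max_eq_right h1, max_eq_right h2, hQ00 hq hhom, hD00 hq hQreg hhom]
  simp

lemma abs_max_le (a : ℝ) : |max a 0| ≤ |a| := by
  rcases le_total a 0 with h | h
  · rw [max_eq_right h]; simp [abs_of_nonpos h]; linarith
  · rw [max_eq_left h]

lemma abs_min_le (a : ℝ) : |min a 0| ≤ |a| := by
  rcases le_total a 0 with h | h
  · rw [min_eq_left h]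
  · rw [min_eq_right h]; simp [abs_of_nonneg h]; linarith

lemma caseA (hQreg : ContDiffOn ℝ 1 Q PS) {z : ℝ × ℝ} (h1 : 0 < z.1) (h2 : 0 < z.2) :
    HasFDerivAt (Qe Q) (Fd Q q z) z := by
  have hU : IsOpen {w : ℝ × ℝ | 0 < w.1 ∧ 0 < w.2} :=
    (isOpen_lt continuous_const continuous_fst).inter (isOpen_lt continuous_const continuous_snd)
  have hUz : {w : ℝ × ℝ | 0 < w.1 ∧ 0 < w.2} ∈ 𝓝 z := hU.mem_nhds ⟨h1, h2⟩
  have hQz : HasFDerivAt Q (fderivWithin ℝ Q PS z) z :=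
    (hD hQreg z ⟨h1.le, h2.le⟩).hasFDerivAt
      (mem_of_superset hUz (fun w hw => ⟨hw.1.le, hw.2.le⟩))
  have hFd : Fd Q q z = fderivWithin ℝ Q PS z := by
    rw [Fd, max_eq_right (neg_nonpos.mpr h1.le), max_eq_right (neg_nonpos.mpr h2.le),
      max_eq_left h1.le, max_eq_left h2.le]
    simp
  rw [hFd]
  refine hQz.congr_of_eventuallyEq ?_
  filter_upwards [hUz] with w hw
  exact Qe_pos hw.1.le hw.2.le

lemma caseC (hq : 2 < q) (hQreg : ContDiffOn ℝ 1 Q PS)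
    (hhom : ∀ θ : ℝ, 0 < θ → ∀ s t : ℝ, 0 ≤ s → 0 ≤ t →
      Q (θ * s, θ * t) = θ ^ q * Q (s, t))
    {z : ℝ × ℝ} (h1 : z.1 < 0) (h2 : z.2 < 0) :
    HasFDerivAt (Qe Q) (Fd Q q z) z := by
  have hU : IsOpen {w : ℝ × ℝ | w.1 < 0 ∧ w.2 < 0} :=
    (isOpen_lt continuous_fst continuous_const).inter (isOpen_lt continuous_snd continuous_const)
  have hUz : {w : ℝ × ℝ | w.1 < 0 ∧ w.2 < 0} ∈ 𝓝 z := hU.mem_nhds ⟨h1, h2⟩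
  have hFd : Fd Q q z = 0 := by
    rw [Fd, max_eq_right h1.le, max_eq_right h2.le, hD00 hq hQreg hhom,
      Real.zero_rpow (by linarith : q - 2 ≠ 0)]
    simp
  rw [hFd]
  refine (hasFDerivAt_const (0:ℝ) z).congr_of_eventuallyEq ?_
  filter_upwards [hUz] with w hw
  rw [Qe_c hq hQreg hhom hw.1.le hw.2.le]

lemma caseB (hq : 2 < q) (hQreg : ContDiffOn ℝ 1 Q PS)
    (hhom : ∀ θ : ℝ, 0 < θ → ∀ s t : ℝ, 0 ≤ s → 0 ≤ t →
      Q (θ * s, θ * t) = θ ^ q * Q (s, t))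
    {z : ℝ × ℝ} (h1 : z.1 < 0) (h2 : 0 < z.2) :
    HasFDerivAt (Qe Q) (Fd Q q z) z := by
  set c1 := fderivWithin ℝ Q PS ((0:ℝ),(1:ℝ)) ((1:ℝ),(0:ℝ)) with hc1
  set A := Q ((0:ℝ),(1:ℝ)) with hA
  have hrq : HasFDerivAt (fun w : ℝ×ℝ => w.2 ^ q)
      ((q * z.2 ^ (q-1)) • ContinuousLinearMap.snd ℝ ℝ ℝ) z :=
    (Real.hasDerivAt_rpow_const (x := z.2) (p := q) (Or.inl h2.ne')).comp_hasFDerivAt z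
      hasFDerivAt_snd
  have hrq1 : HasFDerivAt (fun w : ℝ×ℝ => w.2 ^ (q-1))
      (((q-1) * z.2 ^ (q-1-1)) • ContinuousLinearMap.snd ℝ ℝ ℝ) z :=
    (Real.hasDerivAt_rpow_const (x := z.2) (p := q-1) (Or.inl h2.ne')).comp_hasFDerivAt z
      hasFDerivAt_snd
  have hg : HasFDerivAt (fun w : ℝ×ℝ => w.2 ^ q * A + w.1 * w.2 ^ (q-1) * c1)
      (A • ((q * z.2 ^ (q-1)) • ContinuousLinearMap.snd ℝ ℝ ℝ)
        + c1 • (z.1 • (((q-1) * z.2 ^ (q-1-1)) • ContinuousLinearMap.snd ℝ ℝ ℝ)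
            + z.2 ^ (q-1) • ContinuousLinearMap.fst ℝ ℝ ℝ)) z :=
    (hrq.mul_const A).add ((hasFDerivAt_fst.mul hrq1).mul_const c1)
  have hEu := hEuler1 hq hQreg hhom
  have hFd : Fd Q q z
      = A • ((q * z.2 ^ (q-1)) • ContinuousLinearMap.snd ℝ ℝ ℝ)
        + c1 • (z.1 • (((q-1) * z.2 ^ (q-1-1)) • ContinuousLinearMap.snd ℝ ℝ ℝ)
            + z.2 ^ (q-1) • ContinuousLinearMap.fst ℝ ℝ ℝ) := by
    refine ContinuousLinearMap.ext fun u => ?_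
    have hDu : fderivWithin ℝ Q PS ((0:ℝ),(1:ℝ)) u = u.1 * c1 + u.2 * (q * A) := by
      have hu : (u : ℝ×ℝ) = u.1 • ((1:ℝ),(0:ℝ)) + u.2 • ((0:ℝ),(1:ℝ)) := by
        ext <;> simp
      rw [hu, map_add, map_smul, map_smul, hEu, ← hc1, ← hA]
      simp [smul_eq_mul]
    rw [Fd]
    rw [max_eq_right h1.le, max_eq_left h2.le, max_eq_right (neg_nonpos.mpr h2.le),
      max_eq_left (neg_nonneg.mpr h1.le), hDax1 hq hQreg hhom z.2 h2.le]
    simp only [ContinuousLinearMap.sub_apply, ContinuousLinearMap.add_apply,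
      ContinuousLinearMap.smul_apply, ContinuousLinearMap.coe_snd',
      ContinuousLinearMap.coe_fst', smul_eq_mul, hDu, ← hc1]
    rw [show q - 1 - 1 = q - 2 by ring]
    ring
  rw [hFd]
  refine hg.congr_of_eventuallyEq ?_
  have hU : IsOpen {w : ℝ × ℝ | w.1 < 0 ∧ 0 < w.2} :=
    (isOpen_lt continuous_fst continuous_const).inter (isOpen_lt continuous_const continuous_snd)
  filter_upwards [hU.mem_nhds ⟨h1, h2⟩] with w hw
  rw [Qe_b hq hQreg hhom hw.1.le hw.2.le]

lemma caseD (hq : 2 < q) (hQreg : ContDiffOn ℝ 1 Q PS)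
    (hhom : ∀ θ : ℝ, 0 < θ → ∀ s t : ℝ, 0 ≤ s → 0 ≤ t →
      Q (θ * s, θ * t) = θ ^ q * Q (s, t))
    {z : ℝ × ℝ} (h1 : 0 < z.1) (h2 : z.2 < 0) :
    HasFDerivAt (Qe Q) (Fd Q q z) z := by
  set c2 := fderivWithin ℝ Q PS ((1:ℝ),(0:ℝ)) ((0:ℝ),(1:ℝ)) with hc2
  set A := Q ((1:ℝ),(0:ℝ)) with hA
  have hrq : HasFDerivAt (fun w : ℝ×ℝ => w.1 ^ q)
      ((q * z.1 ^ (q-1)) • ContinuousLinearMap.fst ℝ ℝ ℝ) z :=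
    (Real.hasDerivAt_rpow_const (x := z.1) (p := q) (Or.inl h1.ne')).comp_hasFDerivAt z
      hasFDerivAt_fst
  have hrq1 : HasFDerivAt (fun w : ℝ×ℝ => w.1 ^ (q-1))
      (((q-1) * z.1 ^ (q-1-1)) • ContinuousLinearMap.fst ℝ ℝ ℝ) z :=
    (Real.hasDerivAt_rpow_const (x := z.1) (p := q-1) (Or.inl h1.ne')).comp_hasFDerivAt z
      hasFDerivAt_fst
  have hg : HasFDerivAt (fun w : ℝ×ℝ => w.1 ^ q * A + w.2 * w.1 ^ (q-1) * c2)
      (A • ((q * z.1 ^ (q-1)) • ContinuousLinearMap.fst ℝ ℝ ℝ)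
        + c2 • (z.2 • (((q-1) * z.1 ^ (q-1-1)) • ContinuousLinearMap.fst ℝ ℝ ℝ)
            + z.1 ^ (q-1) • ContinuousLinearMap.snd ℝ ℝ ℝ)) z :=
    (hrq.mul_const A).add ((hasFDerivAt_snd.mul hrq1).mul_const c2)
  have hEu := hEuler2 hq hQreg hhom
  have hFd : Fd Q q z
      = A • ((q * z.1 ^ (q-1)) • ContinuousLinearMap.fst ℝ ℝ ℝ)
        + c2 • (z.2 • (((q-1) * z.1 ^ (q-1-1)) • ContinuousLinearMap.fst ℝ ℝ ℝ)
            + z.1 ^ (q-1) • ContinuousLinearMap.snd ℝ ℝ ℝ) := by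
    refine ContinuousLinearMap.ext fun u => ?_
    have hDu : fderivWithin ℝ Q PS ((1:ℝ),(0:ℝ)) u = u.2 * c2 + u.1 * (q * A) := by
      have hu : (u : ℝ×ℝ) = u.1 • ((1:ℝ),(0:ℝ)) + u.2 • ((0:ℝ),(1:ℝ)) := by
        ext <;> simp
      rw [hu, map_add, map_smul, map_smul, hEu, ← hc2, ← hA]
      simp [smul_eq_mul]
      ring
    rw [Fd]
    rw [max_eq_right h2.le, max_eq_left h1.le, max_eq_right (neg_nonpos.mpr h1.le),
      max_eq_left (neg_nonneg.mpr h2.le), hDax2 hq hQreg hhom z.1 h1.le]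
    simp only [ContinuousLinearMap.sub_apply, ContinuousLinearMap.add_apply,
      ContinuousLinearMap.smul_apply, ContinuousLinearMap.coe_snd',
      ContinuousLinearMap.coe_fst', smul_eq_mul, hDu, ← hc2]
    rw [show q - 1 - 1 = q - 2 by ring]
    ring
  rw [hFd]
  refine hg.congr_of_eventuallyEq ?_
  have hU : IsOpen {w : ℝ × ℝ | 0 < w.1 ∧ w.2 < 0} :=
    (isOpen_lt continuous_const continuous_fst).inter (isOpen_lt continuous_snd continuous_const)
  filter_upwards [hU.mem_nhds ⟨h1, h2⟩] with w hw
  rw [Qe_d hq hQreg hhom hw.1.le hw.2.le]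

lemma caseE (hq : 2 < q) (hQreg : ContDiffOn ℝ 1 Q PS)
    (hhom : ∀ θ : ℝ, 0 < θ → ∀ s t : ℝ, 0 ≤ s → 0 ≤ t →
      Q (θ * s, θ * t) = θ ^ q * Q (s, t))
    {t : ℝ} (h2 : 0 < t) :
    HasFDerivAt (Qe Q) (Fd Q q ((0:ℝ), t)) ((0:ℝ), t) := by
  set c1 := fderivWithin ℝ Q PS ((0:ℝ),(1:ℝ)) ((1:ℝ),(0:ℝ)) with hc1
  set L := fderivWithin ℝ Q PS ((0:ℝ), t) with hL
  set z₀ : ℝ × ℝ := ((0:ℝ), t) with hz₀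
  have hFd : Fd Q q z₀ = L := by
    rw [Fd]
    simp only [hz₀, neg_zero, max_self, max_eq_left h2.le,
      max_eq_right (neg_nonpos.mpr h2.le)]
    simp [hL, hz₀]
  rw [hFd]
  apply HasFDerivAt.of_isLittleO
  have hmem : z₀ ∈ PS := ⟨le_rfl, h2.le⟩
  have h₁ : (fun w => Q w - Q z₀ - L (w - z₀)) =o[𝓝[PS] z₀] (fun w => w - z₀) :=
    (hD hQreg _ hmem).isLittleO
  set g : ℝ × ℝ → ℝ × ℝ := fun w => (max w.1 0, w.2) with hg
  have hgz : g z₀ = z₀ := by simp [hg, hz₀]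
  have hopen : {w : ℝ × ℝ | 0 < w.2} ∈ 𝓝 z₀ :=
    (isOpen_lt continuous_const continuous_snd).mem_nhds h2
  have hgt : Tendsto g (𝓝 z₀) (𝓝[PS] z₀) := by
    rw [tendsto_nhdsWithin_iff]
    constructor
    · have hcont : Continuous g := (continuous_fst.max continuous_const).prodMk continuous_snd
      simpa [hgz] using hcont.tendsto z₀
    · filter_upwards [hopen] with w hw
      exact ⟨le_max_right _ _, le_of_lt hw⟩
  have hgO : (fun w => g w - z₀) =O[𝓝 z₀] (fun w => w - z₀) := by
    refine IsBigO.of_bound 1 (Filter.Eventually.of_forall fun w => ?_)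
    rw [one_mul, Prod.norm_def, Prod.norm_def]
    refine max_le_max ?_ le_rfl
    simp only [hg, hz₀, Prod.fst_sub, Prod.snd_sub, Real.norm_eq_abs, sub_zero]
    exact abs_max_le w.1
  have hE1 : (fun w => Q (g w) - Q z₀ - L (g w - z₀)) =o[𝓝 z₀] (fun w => w - z₀) :=
    (h₁.comp_tendsto hgt).trans_isBigO hgO
  have hbig : (fun w : ℝ × ℝ => min w.1 0) =O[𝓝 z₀] (fun w => ‖w - z₀‖) := by
    refine IsBigO.of_bound 1 (Filter.Eventually.of_forall fun w => ?_)
    rw [one_mul, Real.norm_eq_abs, Real.norm_eq_abs, Prod.norm_def]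
    refine le_trans (abs_min_le w.1) (le_trans ?_ (le_abs_self _))
    refine le_trans ?_ (le_max_left ‖(w - z₀).1‖ ‖(w - z₀).2‖)
    simp [hz₀, Real.norm_eq_abs]
  have hsm : (fun w : ℝ × ℝ => c1 * (w.2 ^ (q-1) - t ^ (q-1))) =o[𝓝 z₀] (fun _ => (1:ℝ)) := by
    rw [isLittleO_one_iff]
    have hct : ContinuousAt (fun w : ℝ × ℝ => c1 * (w.2 ^ (q-1) - t ^ (q-1))) z₀ := by
      refine continuousAt_const.mul (ContinuousAt.sub ?_ continuousAt_const)
      exact (Real.continuousAt_rpow_const t (q-1) (Or.inl h2.ne')).comp (x := z₀) continuousAt_snd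
    have := hct.tendsto
    simpa [hz₀] using this
  have hE2 : (fun w : ℝ × ℝ => min w.1 0 * (c1 * (w.2 ^ (q-1) - t ^ (q-1))))
      =o[𝓝 z₀] (fun w => w - z₀) := by
    have h := hbig.mul_isLittleO hsm
    rw [← isLittleO_norm_right]
    simpa using h
  have hsum := hE1.add hE2
  refine hsum.congr' ?_ EventuallyEq.rfl
  filter_upwards [hopen] with w hw
  have hQe0 : Qe Q z₀ = Q z₀ := Qe_pos le_rfl h2.le
  rcases le_or_gt 0 w.1 with hw1 | hw1
  · have hgw : g w = w := by
      simp only [hg, max_eq_left hw1]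
    rw [hgw, Qe_pos hw1 hw.le, hQe0, min_eq_right hw1]
    ring
  · have hgw : g w = ((0:ℝ), w.2) := by
      simp only [hg, max_eq_right hw1.le]
    have hQew : Qe Q w = w.2 ^ q * Q ((0:ℝ),(1:ℝ)) + w.1 * w.2 ^ (q-1) * c1 :=
      Qe_b hq hQreg hhom hw1.le hw.le
    have hL10 : L ((1:ℝ),(0:ℝ)) = t ^ (q-1) * c1 := by
      rw [hL, hz₀, hDax1 hq hQreg hhom t h2.le]; simp [hc1]
    have hsplit : w - z₀ = (((0:ℝ), w.2) - z₀) + w.1 • ((1:ℝ),(0:ℝ)) := by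
      ext <;> simp [hz₀]
    rw [hgw, hQe0, min_eq_left hw1.le, hQax1 hq hhom w.2 hw.le, hQew, hsplit,
      map_add, map_smul, hL10]
    simp only [smul_eq_mul]
    ring

lemma caseF (hq : 2 < q) (hQreg : ContDiffOn ℝ 1 Q PS)
    (hhom : ∀ θ : ℝ, 0 < θ → ∀ s t : ℝ, 0 ≤ s → 0 ≤ t →
      Q (θ * s, θ * t) = θ ^ q * Q (s, t))
    {s : ℝ} (h1 : 0 < s) :
    HasFDerivAt (Qe Q) (Fd Q q (s, (0:ℝ))) (s, (0:ℝ)) := by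
  set c2 := fderivWithin ℝ Q PS ((1:ℝ),(0:ℝ)) ((0:ℝ),(1:ℝ)) with hc2
  set L := fderivWithin ℝ Q PS (s, (0:ℝ)) with hL
  set z₀ : ℝ × ℝ := (s, (0:ℝ)) with hz₀
  have hFd : Fd Q q z₀ = L := by
    rw [Fd]
    simp only [hz₀, neg_zero, max_self, max_eq_left h1.le,
      max_eq_right (neg_nonpos.mpr h1.le)]
    simp [hL, hz₀]
  rw [hFd]
  apply HasFDerivAt.of_isLittleO
  have hmem : z₀ ∈ PS := ⟨h1.le, le_rfl⟩
  have h₁ : (fun w => Q w - Q z₀ - L (w - z₀)) =o[𝓝[PS] z₀] (fun w => w - z₀) :=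
    (hD hQreg _ hmem).isLittleO
  set g : ℝ × ℝ → ℝ × ℝ := fun w => (w.1, max w.2 0) with hg
  have hgz : g z₀ = z₀ := by simp [hg, hz₀]
  have hopen : {w : ℝ × ℝ | 0 < w.1} ∈ 𝓝 z₀ :=
    (isOpen_lt continuous_const continuous_fst).mem_nhds h1
  have hgt : Tendsto g (𝓝 z₀) (𝓝[PS] z₀) := by
    rw [tendsto_nhdsWithin_iff]
    constructor
    · have hcont : Continuous g := continuous_fst.prodMk (continuous_snd.max continuous_const)
      simpa [hgz] using hcont.tendsto z₀
    · filter_upwards [hopen] with w hw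
      exact ⟨le_of_lt hw, le_max_right _ _⟩
  have hgO : (fun w => g w - z₀) =O[𝓝 z₀] (fun w => w - z₀) := by
    refine IsBigO.of_bound 1 (Filter.Eventually.of_forall fun w => ?_)
    rw [one_mul, Prod.norm_def, Prod.norm_def]
    refine max_le_max le_rfl ?_
    simp only [hg, hz₀, Prod.fst_sub, Prod.snd_sub, Real.norm_eq_abs, sub_zero]
    exact abs_max_le w.2
  have hE1 : (fun w => Q (g w) - Q z₀ - L (g w - z₀)) =o[𝓝 z₀] (fun w => w - z₀) :=
    (h₁.comp_tendsto hgt).trans_isBigO hgO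
  have hbig : (fun w : ℝ × ℝ => min w.2 0) =O[𝓝 z₀] (fun w => ‖w - z₀‖) := by
    refine IsBigO.of_bound 1 (Filter.Eventually.of_forall fun w => ?_)
    rw [one_mul, Real.norm_eq_abs, Real.norm_eq_abs, Prod.norm_def]
    refine le_trans (abs_min_le w.2) (le_trans ?_ (le_abs_self _))
    refine le_trans ?_ (le_max_right ‖(w - z₀).1‖ ‖(w - z₀).2‖)
    simp [hz₀, Real.norm_eq_abs]
  have hsm : (fun w : ℝ × ℝ => c2 * (w.1 ^ (q-1) - s ^ (q-1))) =o[𝓝 z₀] (fun _ => (1:ℝ)) := by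
    rw [isLittleO_one_iff]
    have hct : ContinuousAt (fun w : ℝ × ℝ => c2 * (w.1 ^ (q-1) - s ^ (q-1))) z₀ := by
      refine continuousAt_const.mul (ContinuousAt.sub ?_ continuousAt_const)
      exact (Real.continuousAt_rpow_const s (q-1) (Or.inl h1.ne')).comp (x := z₀) continuousAt_fst
    have := hct.tendsto
    simpa [hz₀] using this
  have hE2 : (fun w : ℝ × ℝ => min w.2 0 * (c2 * (w.1 ^ (q-1) - s ^ (q-1))))
      =o[𝓝 z₀] (fun w => w - z₀) := by
    have h := hbig.mul_isLittleO hsm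
    rw [← isLittleO_norm_right]
    simpa using h
  have hsum := hE1.add hE2
  refine hsum.congr' ?_ EventuallyEq.rfl
  filter_upwards [hopen] with w hw
  have hQe0 : Qe Q z₀ = Q z₀ := Qe_pos h1.le le_rfl
  rcases le_or_gt 0 w.2 with hw2 | hw2
  · have hgw : g w = w := by
      simp only [hg, max_eq_left hw2]
    rw [hgw, Qe_pos hw.le hw2, hQe0, min_eq_right hw2]
    ring
  · have hgw : g w = (w.1, (0:ℝ)) := by
      simp only [hg, max_eq_right hw2.le]
    have hQew : Qe Q w = w.1 ^ q * Q ((1:ℝ),(0:ℝ)) + w.2 * w.1 ^ (q-1) * c2 :=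
      Qe_d hq hQreg hhom hw.le hw2.le
    have hL01 : L ((0:ℝ),(1:ℝ)) = s ^ (q-1) * c2 := by
      rw [hL, hz₀, hDax2 hq hQreg hhom s h1.le]; simp [hc2]
    have hsplit : w - z₀ = ((w.1, (0:ℝ)) - z₀) + w.2 • ((0:ℝ),(1:ℝ)) := by
      ext <;> simp [hz₀]
    rw [hgw, hQe0, min_eq_left hw2.le, hQax2 hq hhom w.1 hw.le, hQew, hsplit,
      map_add, map_smul, hL01]
    simp only [smul_eq_mul]
    ring

lemma caseG (hq : 2 < q) (hQreg : ContDiffOn ℝ 1 Q PS)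
    (hhom : ∀ θ : ℝ, 0 < θ → ∀ s t : ℝ, 0 ≤ s → 0 ≤ t →
      Q (θ * s, θ * t) = θ ^ q * Q (s, t))
    {t : ℝ} (h2 : t < 0) :
    HasFDerivAt (Qe Q) (Fd Q q ((0:ℝ), t)) ((0:ℝ), t) := by
  set c2 := fderivWithin ℝ Q PS ((1:ℝ),(0:ℝ)) ((0:ℝ),(1:ℝ)) with hc2
  set z₀ : ℝ × ℝ := ((0:ℝ), t) with hz₀
  have hFd : Fd Q q z₀ = 0 := by
    rw [Fd]
    simp only [hz₀, neg_zero, max_self, max_eq_right h2.le]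
    rw [hD00 hq hQreg hhom, Real.zero_rpow (by linarith : q - 2 ≠ 0)]
    simp
  rw [hFd]
  apply HasFDerivAt.of_isLittleO
  have hQe0 : Qe Q z₀ = 0 := Qe_c hq hQreg hhom le_rfl h2.le
  have hbig : (fun w : ℝ × ℝ => max w.1 0) =O[𝓝 z₀] (fun w => ‖w - z₀‖) := by
    refine IsBigO.of_bound 1 (Filter.Eventually.of_forall fun w => ?_)
    rw [one_mul, Real.norm_eq_abs, Real.norm_eq_abs, Prod.norm_def]
    refine le_trans (abs_max_le w.1) (le_trans ?_ (le_abs_self _))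
    refine le_trans ?_ (le_max_left ‖(w - z₀).1‖ ‖(w - z₀).2‖)
    simp [hz₀, Real.norm_eq_abs]
  have hsm : (fun w : ℝ × ℝ => (max w.1 0) ^ (q-1) * Q ((1:ℝ),(0:ℝ))
      + w.2 * (max w.1 0) ^ (q-2) * c2) =o[𝓝 z₀] (fun _ => (1:ℝ)) := by
    rw [isLittleO_one_iff]
    have hc1' : ContinuousAt (fun w : ℝ × ℝ => (max w.1 0) ^ (q-1)) z₀ := by
      have ha : ContinuousAt (fun x : ℝ => x ^ (q-1)) (max z₀.1 0) := by
        simp only [hz₀, max_self]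
        exact Real.continuousAt_rpow_const 0 (q-1) (Or.inr (by linarith))
      exact ha.comp (x := z₀) ((continuous_fst.max continuous_const).continuousAt)
    have hc2' : ContinuousAt (fun w : ℝ × ℝ => (max w.1 0) ^ (q-2)) z₀ := by
      have ha : ContinuousAt (fun x : ℝ => x ^ (q-2)) (max z₀.1 0) := by
        simp only [hz₀, max_self]
        exact Real.continuousAt_rpow_const 0 (q-2) (Or.inr (by linarith))
      exact ha.comp (x := z₀) ((continuous_fst.max continuous_const).continuousAt)
    have hct : ContinuousAt (fun w : ℝ × ℝ => (max w.1 0) ^ (q-1) * Q ((1:ℝ),(0:ℝ))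
        + w.2 * (max w.1 0) ^ (q-2) * c2) z₀ :=
      (hc1'.mul continuousAt_const).add ((continuousAt_snd.mul hc2').mul continuousAt_const)
    have h0 := hct.tendsto
    have hval : (max (z₀.1) 0) ^ (q-1) * Q ((1:ℝ),(0:ℝ)) + z₀.2 * (max z₀.1 0) ^ (q-2) * c2 = 0 := by
      simp only [hz₀, max_self]
      rw [Real.zero_rpow (by linarith : q - 1 ≠ 0), Real.zero_rpow (by linarith : q - 2 ≠ 0)]
      ring
    rw [hval] at h0
    exact h0
  have hE := hbig.mul_isLittleO hsm
  have hE' : (fun w : ℝ × ℝ => max w.1 0 * ((max w.1 0) ^ (q-1) * Q ((1:ℝ),(0:ℝ))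
      + w.2 * (max w.1 0) ^ (q-2) * c2)) =o[𝓝 z₀] (fun w => w - z₀) := by
    rw [← isLittleO_norm_right]
    simpa using hE
  refine hE'.congr' ?_ EventuallyEq.rfl
  have hopen : {w : ℝ × ℝ | w.2 < 0} ∈ 𝓝 z₀ :=
    (isOpen_lt continuous_snd continuous_const).mem_nhds h2
  filter_upwards [hopen] with w hw
  rw [hQe0, ContinuousLinearMap.zero_apply, sub_zero, sub_zero]
  rcases le_or_gt w.1 0 with hw1 | hw1
  · rw [max_eq_right hw1, Qe_c hq hQreg hhom hw1 hw.le, zero_mul]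
  · rw [max_eq_left hw1.le, Qe_d hq hQreg hhom hw1.le hw.le]
    have hp1 : w.1 ^ q = w.1 ^ (q-1) * w.1 := by
      rw [← Real.rpow_add_one (ne_of_gt hw1) (q-1)]; congr 1; ring
    have hp2 : w.1 ^ (q-1) = w.1 ^ (q-2) * w.1 := by
      rw [← Real.rpow_add_one (ne_of_gt hw1) (q-2)]; congr 1; ring
    rw [hp1, hp2]; ring

lemma caseH (hq : 2 < q) (hQreg : ContDiffOn ℝ 1 Q PS)
    (hhom : ∀ θ : ℝ, 0 < θ → ∀ s t : ℝ, 0 ≤ s → 0 ≤ t →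
      Q (θ * s, θ * t) = θ ^ q * Q (s, t))
    {s : ℝ} (h1 : s < 0) :
    HasFDerivAt (Qe Q) (Fd Q q (s, (0:ℝ))) (s, (0:ℝ)) := by
  set c1 := fderivWithin ℝ Q PS ((0:ℝ),(1:ℝ)) ((1:ℝ),(0:ℝ)) with hc1
  set z₀ : ℝ × ℝ := (s, (0:ℝ)) with hz₀
  have hFd : Fd Q q z₀ = 0 := by
    rw [Fd]
    simp only [hz₀, neg_zero, max_self, max_eq_right h1.le]
    rw [hD00 hq hQreg hhom, Real.zero_rpow (by linarith : q - 2 ≠ 0)]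
    simp
  rw [hFd]
  apply HasFDerivAt.of_isLittleO
  have hQe0 : Qe Q z₀ = 0 := Qe_c hq hQreg hhom h1.le le_rfl
  have hbig : (fun w : ℝ × ℝ => max w.2 0) =O[𝓝 z₀] (fun w => ‖w - z₀‖) := by
    refine IsBigO.of_bound 1 (Filter.Eventually.of_forall fun w => ?_)
    rw [one_mul, Real.norm_eq_abs, Real.norm_eq_abs, Prod.norm_def]
    refine le_trans (abs_max_le w.2) (le_trans ?_ (le_abs_self _))
    refine le_trans ?_ (le_max_right ‖(w - z₀).1‖ ‖(w - z₀).2‖)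
    simp [hz₀, Real.norm_eq_abs]
  have hsm : (fun w : ℝ × ℝ => (max w.2 0) ^ (q-1) * Q ((0:ℝ),(1:ℝ))
      + w.1 * (max w.2 0) ^ (q-2) * c1) =o[𝓝 z₀] (fun _ => (1:ℝ)) := by
    rw [isLittleO_one_iff]
    have hc1' : ContinuousAt (fun w : ℝ × ℝ => (max w.2 0) ^ (q-1)) z₀ := by
      have ha : ContinuousAt (fun x : ℝ => x ^ (q-1)) (max z₀.2 0) := by
        simp only [hz₀, max_self]
        exact Real.continuousAt_rpow_const 0 (q-1) (Or.inr (by linarith))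
      exact ha.comp (x := z₀) ((continuous_snd.max continuous_const).continuousAt)
    have hc2' : ContinuousAt (fun w : ℝ × ℝ => (max w.2 0) ^ (q-2)) z₀ := by
      have ha : ContinuousAt (fun x : ℝ => x ^ (q-2)) (max z₀.2 0) := by
        simp only [hz₀, max_self]
        exact Real.continuousAt_rpow_const 0 (q-2) (Or.inr (by linarith))
      exact ha.comp (x := z₀) ((continuous_snd.max continuous_const).continuousAt)
    have hct : ContinuousAt (fun w : ℝ × ℝ => (max w.2 0) ^ (q-1) * Q ((0:ℝ),(1:ℝ))
        + w.1 * (max w.2 0) ^ (q-2) * c1) z₀ :=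
      (hc1'.mul continuousAt_const).add ((continuousAt_fst.mul hc2').mul continuousAt_const)
    have h0 := hct.tendsto
    have hval : (max (z₀.2) 0) ^ (q-1) * Q ((0:ℝ),(1:ℝ)) + z₀.1 * (max z₀.2 0) ^ (q-2) * c1 = 0 := by
      simp only [hz₀, max_self]
      rw [Real.zero_rpow (by linarith : q - 1 ≠ 0), Real.zero_rpow (by linarith : q - 2 ≠ 0)]
      ring
    rw [hval] at h0
    exact h0
  have hE := hbig.mul_isLittleO hsm
  have hE' : (fun w : ℝ × ℝ => max w.2 0 * ((max w.2 0) ^ (q-1) * Q ((0:ℝ),(1:ℝ))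
      + w.1 * (max w.2 0) ^ (q-2) * c1)) =o[𝓝 z₀] (fun w => w - z₀) := by
    rw [← isLittleO_norm_right]
    simpa using hE
  refine hE'.congr' ?_ EventuallyEq.rfl
  have hopen : {w : ℝ × ℝ | w.1 < 0} ∈ 𝓝 z₀ :=
    (isOpen_lt continuous_fst continuous_const).mem_nhds h1
  filter_upwards [hopen] with w hw
  rw [hQe0, ContinuousLinearMap.zero_apply, sub_zero, sub_zero]
  rcases le_or_gt w.2 0 with hw2 | hw2
  · rw [max_eq_right hw2, Qe_c hq hQreg hhom hw.le hw2, zero_mul]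
  · rw [max_eq_left hw2.le, Qe_b hq hQreg hhom hw.le hw2.le]
    have hp1 : w.2 ^ q = w.2 ^ (q-1) * w.2 := by
      rw [← Real.rpow_add_one (ne_of_gt hw2) (q-1)]; congr 1; ring
    have hp2 : w.2 ^ (q-1) = w.2 ^ (q-2) * w.2 := by
      rw [← Real.rpow_add_one (ne_of_gt hw2) (q-2)]; congr 1; ring
    rw [hp1, hp2]; ring

lemma caseI (hq : 2 < q) (hQreg : ContDiffOn ℝ 1 Q PS)
    (hhom : ∀ θ : ℝ, 0 < θ → ∀ s t : ℝ, 0 ≤ s → 0 ≤ t →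
      Q (θ * s, θ * t) = θ ^ q * Q (s, t)) :
    HasFDerivAt (Qe Q) (Fd Q q ((0:ℝ), (0:ℝ))) ((0:ℝ), (0:ℝ)) := by
  set z₀ : ℝ × ℝ := ((0:ℝ), (0:ℝ)) with hz₀
  have hFd : Fd Q q z₀ = 0 := by
    rw [Fd]
    simp only [hz₀, neg_zero, max_self]
    rw [hD00 hq hQreg hhom]
    simp
  rw [hFd]
  apply HasFDerivAt.of_isLittleO
  have hQe0 : Qe Q z₀ = 0 := Qe_c hq hQreg hhom le_rfl le_rfl
  -- bounds on the unit square
  have hK : IsCompact (Set.Icc (0:ℝ) 1 ×ˢ Set.Icc (0:ℝ) 1) := isCompact_Icc.prod isCompact_Icc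
  have hKsub : (Set.Icc (0:ℝ) 1 ×ˢ Set.Icc (0:ℝ) 1) ⊆ PS := fun w hw => ⟨hw.1.1, hw.2.1⟩
  obtain ⟨C1, hC1⟩ := hK.exists_bound_of_continuousOn (hQreg.continuousOn.mono hKsub)
  obtain ⟨C2, hC2⟩ := hK.exists_bound_of_continuousOn
    ((hQreg.continuousOn_fderivWithin PS_ud le_rfl).mono hKsub)
  have hC1n : 0 ≤ C1 := le_trans (norm_nonneg _) (hC1 ((0:ℝ),(0:ℝ)) (by constructor <;> constructor <;> norm_num))
  have est : ∀ w : ℝ × ℝ, ‖w‖ ≤ 1 → ‖Qe Q w‖ ≤ (C1 + C2) * ‖w‖ ^ (q-1) * ‖w‖ := by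
    intro w hw1
    rcases eq_or_lt_of_le (norm_nonneg w) with hr | hr
    · have hw0 : w = 0 := norm_eq_zero.mp hr.symm
      rw [hw0]
      have : Qe Q (0 : ℝ × ℝ) = 0 := Qe_c hq hQreg hhom le_rfl le_rfl
      rw [this]
      simp
    · set r : ℝ := ‖w‖ with hrdef
      set u : ℝ × ℝ := (max w.1 0 / r, max w.2 0 / r) with hu
      have hmax1 : |max w.1 0| ≤ r := le_trans (abs_max_le w.1) (norm_fst_le w)
      have hmax2 : |max w.2 0| ≤ r := le_trans (abs_max_le w.2) (norm_snd_le w)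
      have hneg1 : |max (-w.1) 0| ≤ r := by
        refine le_trans (abs_max_le (-w.1)) ?_
        rw [abs_neg]; exact norm_fst_le w
      have hneg2 : |max (-w.2) 0| ≤ r := by
        refine le_trans (abs_max_le (-w.2)) ?_
        rw [abs_neg]; exact norm_snd_le w
      have hu1 : 0 ≤ u.1 := div_nonneg (le_max_right _ _) hr.le
      have hu2 : 0 ≤ u.2 := div_nonneg (le_max_right _ _) hr.le
      have hu1' : u.1 ≤ 1 := by
        rw [hu]; exact (div_le_one hr).mpr (le_trans (le_abs_self _) hmax1)
      have hu2' : u.2 ≤ 1 := by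
        rw [hu]; exact (div_le_one hr).mpr (le_trans (le_abs_self _) hmax2)
      have huK : u ∈ Set.Icc (0:ℝ) 1 ×ˢ Set.Icc (0:ℝ) 1 := ⟨⟨hu1, hu1'⟩, ⟨hu2, hu2'⟩⟩
      have hru : (max w.1 0, max w.2 0) = (r * u.1, r * u.2) := by
        rw [hu]
        simp only [Prod.mk.injEq]
        constructor <;> rw [mul_div_cancel₀ _ hr.ne']
      have hQr : Q (max w.1 0, max w.2 0) = r ^ q * Q u := by
        rw [hru]
        have := hhom r hr u.1 u.2 hu1 hu2
        simpa using this
      have hDr : fderivWithin ℝ Q PS (max w.1 0, max w.2 0)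
          = r ^ (q-1) • fderivWithin ℝ Q PS u := by
        have := hDhom hQreg hhom r hr u ⟨hu1, hu2⟩
        have hreq : r • u = (max w.1 0, max w.2 0) := by
          rw [hru, hu]
          simp only [Prod.smul_mk, smul_eq_mul]
        rw [← hreq]
        exact this
      have hQe : Qe Q w = r ^ q * Q u
          - r ^ (q-1) * (fderivWithin ℝ Q PS u (max (-w.1) 0, max (-w.2) 0)) := by
        rw [Qe, hQr, hDr]
        simp [smul_eq_mul]
      rw [hQe]
      have hbound1 : ‖Q u‖ ≤ C1 := hC1 u huK
      have hbound2 : ‖fderivWithin ℝ Q PS u‖ ≤ C2 := hC2 u huK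
      have hvec : ‖((max (-w.1) 0, max (-w.2) 0) : ℝ × ℝ)‖ ≤ r := by
        rw [Prod.norm_def]
        exact max_le (by rw [Real.norm_eq_abs]; exact hneg1) (by rw [Real.norm_eq_abs]; exact hneg2)
      have happ : ‖fderivWithin ℝ Q PS u (max (-w.1) 0, max (-w.2) 0)‖ ≤ C2 * r :=
        le_trans ((fderivWithin ℝ Q PS u).le_opNorm _)
          (mul_le_mul hbound2 hvec (norm_nonneg _) (le_trans (norm_nonneg _) hbound2))
      have hrq : r ^ q = r ^ (q-1) * r := by
        rw [← Real.rpow_add_one hr.ne' (q-1)]; congr 1; ring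
      have hrp : (0:ℝ) ≤ r ^ (q-1) := Real.rpow_nonneg hr.le _
      calc ‖r ^ q * Q u - r ^ (q-1) * (fderivWithin ℝ Q PS u (max (-w.1) 0, max (-w.2) 0))‖
          ≤ ‖r ^ q * Q u‖ + ‖r ^ (q-1) * (fderivWithin ℝ Q PS u (max (-w.1) 0, max (-w.2) 0))‖ :=
            norm_sub_le _ _
        _ ≤ r ^ (q-1) * r * C1 + r ^ (q-1) * (C2 * r) := by
            refine add_le_add ?_ ?_
            · rw [norm_mul, hrq, Real.norm_eq_abs, abs_of_nonneg (by positivity)]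
              calc r ^ (q-1) * r * ‖Q u‖ ≤ r ^ (q-1) * r * C1 := by
                    refine mul_le_mul_of_nonneg_left hbound1 (by positivity)
                _ = r ^ (q-1) * r * C1 := rfl
            · rw [norm_mul, Real.norm_eq_abs, abs_of_nonneg hrp]
              exact mul_le_mul_of_nonneg_left happ hrp
        _ = (C1 + C2) * r ^ (q-1) * r := by ring
  rw [isLittleO_iff]
  intro c hc
  have htend : Tendsto (fun w : ℝ × ℝ => (C1 + C2) * ‖w‖ ^ (q-1)) (𝓝 z₀) (𝓝 0) := by
    have hcn : ContinuousAt (fun x : ℝ => x ^ (q-1)) ‖z₀‖ := by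
      have : ‖z₀‖ = 0 := by simp [hz₀, Prod.norm_def]
      rw [this]
      exact Real.continuousAt_rpow_const 0 (q-1) (Or.inr (by linarith))
    have hct : ContinuousAt (fun w : ℝ × ℝ => (C1 + C2) * ‖w‖ ^ (q-1)) z₀ :=
      continuousAt_const.mul (hcn.comp (x := z₀) continuous_norm.continuousAt)
    have h0 := hct.tendsto
    have hval : (C1 + C2) * ‖z₀‖ ^ (q-1) = 0 := by
      have : ‖z₀‖ = 0 := by simp [hz₀, Prod.norm_def]
      rw [this, Real.zero_rpow (by linarith : q - 1 ≠ 0), mul_zero]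
    rw [hval] at h0
    exact h0
  have h1 : ∀ᶠ w : ℝ × ℝ in 𝓝 z₀, (C1 + C2) * ‖w‖ ^ (q-1) < c :=
    htend.eventually_lt_const hc
  have h2 : ∀ᶠ w : ℝ × ℝ in 𝓝 z₀, ‖w‖ < 1 := by
    have hn0 : ‖z₀‖ = 0 := by simp [hz₀, Prod.norm_def]
    have := (continuous_norm.tendsto z₀).eventually_lt_const (by rw [hn0]; norm_num : ‖z₀‖ < 1)
    exact this
  filter_upwards [h1, h2] with w hw1 hw2
  rw [hQe0, ContinuousLinearMap.zero_apply, sub_zero, sub_zero]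
  have hsub : w - z₀ = w := by simp [hz₀]
  rw [hsub]
  calc ‖Qe Q w‖ ≤ (C1 + C2) * ‖w‖ ^ (q-1) * ‖w‖ := est w hw2.le
    _ ≤ c * ‖w‖ := mul_le_mul_of_nonneg_right hw1.le (norm_nonneg _)

lemma key (hq : 2 < q) (hQreg : ContDiffOn ℝ 1 Q PS)
    (hhom : ∀ θ : ℝ, 0 < θ → ∀ s t : ℝ, 0 ≤ s → 0 ≤ t →
      Q (θ * s, θ * t) = θ ^ q * Q (s, t)) :
    ∀ z : ℝ × ℝ, HasFDerivAt (Qe Q) (Fd Q q z) z := by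
  rintro ⟨s, t⟩
  rcases lt_trichotomy s 0 with hs | hs | hs <;> rcases lt_trichotomy t 0 with ht | ht | ht
  · exact caseC hq hQreg hhom hs ht
  · subst ht; exact caseH hq hQreg hhom hs
  · exact caseB hq hQreg hhom hs ht
  · subst hs; exact caseG hq hQreg hhom ht
  · subst hs; subst ht; exact caseI hq hQreg hhom
  · subst hs; exact caseE hq hQreg hhom ht
  · exact caseD hq hQreg hhom hs ht
  · subst ht; exact caseF hq hQreg hhom hs
  · exact caseA hQreg hs ht

lemma FdCont (hq : 2 < q) (hQreg : ContDiffOn ℝ 1 Q PS) : Continuous (Fd Q q) := by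
  have hDc : ContinuousOn (fderivWithin ℝ Q PS) PS :=
    hQreg.continuousOn_fderivWithin PS_ud le_rfl
  have hpos : Continuous (fun z : ℝ × ℝ => ((max z.1 0, max z.2 0) : ℝ × ℝ)) :=
    (continuous_fst.max continuous_const).prodMk (continuous_snd.max continuous_const)
  have h1 : Continuous (fun z : ℝ × ℝ => fderivWithin ℝ Q PS (max z.1 0, max z.2 0)) :=
    hDc.comp_continuous hpos (fun z => ⟨le_max_right _ _, le_max_right _ _⟩)
  have hrp1 : Continuous (fun z : ℝ × ℝ => (max z.2 0) ^ (q-2)) := by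
    rw [continuous_iff_continuousAt]
    intro z
    have ha : ContinuousAt (fun x : ℝ => x ^ (q-2)) (max z.2 0) :=
      Real.continuousAt_rpow_const _ _ (Or.inr (by linarith))
    exact ha.comp (x := z) ((continuous_snd.max continuous_const).continuousAt)
  have hrp2 : Continuous (fun z : ℝ × ℝ => (max z.1 0) ^ (q-2)) := by
    rw [continuous_iff_continuousAt]
    intro z
    have ha : ContinuousAt (fun x : ℝ => x ^ (q-2)) (max z.1 0) :=
      Real.continuousAt_rpow_const _ _ (Or.inr (by linarith))
    exact ha.comp (x := z) ((continuous_fst.max continuous_const).continuousAt)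
  have hs1 : Continuous (fun z : ℝ × ℝ => max (-z.1) 0) :=
    continuous_fst.neg.max continuous_const
  have hs2 : Continuous (fun z : ℝ × ℝ => max (-z.2) 0) :=
    continuous_snd.neg.max continuous_const
  unfold Fd
  refine Continuous.sub (Continuous.sub h1 ?_) ?_
  · exact (((hs1.mul continuous_const).mul continuous_const).mul hrp1).smul continuous_const
  · exact (((hs2.mul continuous_const).mul continuous_const).mul hrp2).smul continuous_const

lemma QeCD (hq : 2 < q) (hQreg : ContDiffOn ℝ 1 Q PS)
    (hhom : ∀ θ : ℝ, 0 < θ → ∀ s t : ℝ, 0 ≤ s → 0 ≤ t →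
      Q (θ * s, θ * t) = θ ^ q * Q (s, t)) : ContDiff ℝ 1 (Qe Q) := by
  rw [contDiff_one_iff_fderiv]
  have hkey := key hq hQreg hhom
  refine ⟨fun z => (hkey z).differentiableAt, ?_⟩
  have hfd : fderiv ℝ (Qe Q) = Fd Q q := funext fun z => (hkey z).fderiv
  rw [hfd]
  exact FdCont hq hQreg

end Stmt4Aux


/-- Let `Q` be `C¹` on the closed first quadrant and `q`-homogeneous with `q > 2`. Then
the extension `Q̃(s,t) := Q(s⁺,t⁺) − ∇Q(s⁺,t⁺)·(s⁻,t⁻)` is `C¹` on `ℝ²`; moreover, if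
`Q_s ≥ 0` on the quadrant then `Q̃_s(s,t) ≥ 0` whenever `s ≤ 0`, and if `Q_t ≥ 0` on the
quadrant then `Q̃_t(s,t) ≥ 0` whenever `t ≤ 0`. -/
theorem stmt_4 (Q : ℝ × ℝ → ℝ) (q : ℝ) (hq : 2 < q)
    (S : Set (ℝ × ℝ)) (hS : S = {z : ℝ × ℝ | 0 ≤ z.1 ∧ 0 ≤ z.2})
    (hQreg : ContDiffOn ℝ 1 Q S)
    (hhom : ∀ θ : ℝ, 0 < θ → ∀ s t : ℝ, 0 ≤ s → 0 ≤ t →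
      Q (θ * s, θ * t) = θ ^ q * Q (s, t))
    (Qext : ℝ × ℝ → ℝ)
    (hQext : Qext = fun z : ℝ × ℝ =>
      Q (max z.1 0, max z.2 0)
        - fderivWithin ℝ Q S (max z.1 0, max z.2 0) (max (-z.1) 0, max (-z.2) 0)) :
    ContDiff ℝ 1 Qext
    ∧ ((∀ z ∈ S, 0 ≤ fderivWithin ℝ Q S z (1, 0)) →
        ∀ s t : ℝ, s ≤ 0 → 0 ≤ deriv (fun x : ℝ => Qext (x, t)) s)
    ∧ ((∀ z ∈ S, 0 ≤ fderivWithin ℝ Q S z (0, 1)) →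
        ∀ s t : ℝ, t ≤ 0 → 0 ≤ deriv (fun y : ℝ => Qext (s, y)) t) := by
  have hPS : S = PS := hS
  subst hPS
  have hQe : Qext = Qe Q := hQext
  subst hQe
  have hkey := key hq hQreg hhom
  refine ⟨QeCD hq hQreg hhom, ?_, ?_⟩
  · intro hmono s t hs
    have h1 : HasDerivAt (fun x : ℝ => ((x, t) : ℝ × ℝ)) (((1:ℝ),(0:ℝ))) s :=
      (hasDerivAt_id s).prodMk (hasDerivAt_const s t)
    have hder : HasDerivAt (fun x : ℝ => Qe Q (x, t)) ((Fd Q q (s,t)) ((1:ℝ),(0:ℝ))) s :=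
      (hkey (s,t)).comp_hasDerivAt (f := fun x : ℝ => ((x, t) : ℝ × ℝ)) s h1
    rw [hder.deriv, Fd]
    simp only [ContinuousLinearMap.sub_apply, ContinuousLinearMap.smul_apply,
      ContinuousLinearMap.coe_fst', ContinuousLinearMap.coe_snd', smul_eq_mul]
    rw [max_eq_right hs, Real.zero_rpow (by linarith : q - 2 ≠ 0)]
    have hm := hmono ((0:ℝ), max t 0) ⟨le_rfl, le_max_right _ _⟩
    simpa using hm
  · intro hmono s t ht
    have h1 : HasDerivAt (fun y : ℝ => ((s, y) : ℝ × ℝ)) (((0:ℝ),(1:ℝ))) t :=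
      (hasDerivAt_const t s).prodMk (hasDerivAt_id t)
    have hder : HasDerivAt (fun y : ℝ => Qe Q (s, y)) ((Fd Q q (s,t)) ((0:ℝ),(1:ℝ))) t :=
      (hkey (s,t)).comp_hasDerivAt (f := fun y : ℝ => ((s, y) : ℝ × ℝ)) t h1
    rw [hder.deriv, Fd]
    simp only [ContinuousLinearMap.sub_apply, ContinuousLinearMap.smul_apply,
      ContinuousLinearMap.coe_fst', ContinuousLinearMap.coe_snd', smul_eq_mul]
    rw [max_eq_right ht, Real.zero_rpow (by linarith : q - 2 ≠ 0)]
    have hm := hmono (max s 0, (0:ℝ)) ⟨le_max_right _ _, le_rfl⟩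
    simpa using hm
end

section
/- Under the setting of the functional I on the Nehari manifold N, for every z ∈ X with z ≠ 0 and ∫H(z) > 0 there exists a unique t_z > 0 such that t_z·z ∈ N, and the function t ↦ I(tz), t ≥ 0, attains its maximum exactly at t = t_z. -/
open Real Set

/-- Fibering map property on the Nehari manifold: writing `a = ‖z‖² > 0`,
`Qz = ∫Q(z) ≥ 0`, `Hz = ∫H(z) > 0` and `I(tz) = (t²/2)a − t^q Qz − (t^{2*}/2*)Hz`,
there is a unique `t_z > 0` with `t_z z` on the Nehari manifold (i.e.
`t_z² a − q t_z^q Qz − t_z^{2*} Hz = 0`), and `t ↦ I(tz)` on `[0,∞)` attains its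
maximum exactly at `t = t_z`. -/
theorem stmt_8 (N : ℕ) (hN : 3 ≤ N) (ts q : ℝ) (hts : ts = 2 * N / ((N : ℝ) - 2))
    (hq : 2 < q) (hqts : q < ts)
    (a Qz Hz : ℝ) (ha : 0 < a) (hQz : 0 ≤ Qz) (hHz : 0 < Hz) :
    ∃! tz : ℝ, 0 < tz ∧
      tz ^ 2 * a - q * tz ^ q * Qz - tz ^ ts * Hz = 0 ∧
      IsMaxOn (fun t : ℝ => t ^ 2 / 2 * a - t ^ q * Qz - t ^ ts / ts * Hz) (Ici 0) tz ∧
      (∀ t ∈ Ici (0 : ℝ), t ≠ tz →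
        t ^ 2 / 2 * a - t ^ q * Qz - t ^ ts / ts * Hz
          < tz ^ 2 / 2 * a - tz ^ q * Qz - tz ^ ts / ts * Hz) := by
  have hp2 : (2:ℝ) < ts := lt_trans hq hqts
  have hts0 : ts ≠ 0 := by linarith
  set φ : ℝ → ℝ := fun t => t ^ 2 / 2 * a - t ^ q * Qz - t ^ ts / ts * Hz with hφ
  set ψ : ℝ → ℝ := fun t => a - q * t ^ (q - 2) * Qz - t ^ (ts - 2) * Hz with hψ
  -- ψ is strictly decreasing on [0, ∞)
  have hψanti : ∀ x y : ℝ, 0 ≤ x → x < y → ψ y < ψ x := by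
    intro x y hx hxy
    have h1 : q * x ^ (q - 2) * Qz ≤ q * y ^ (q - 2) * Qz := by
      apply mul_le_mul_of_nonneg_right _ hQz
      exact mul_le_mul_of_nonneg_left (Real.rpow_le_rpow hx hxy.le (by linarith)) (by linarith)
    have h2 : x ^ (ts - 2) * Hz < y ^ (ts - 2) * Hz :=
      mul_lt_mul_of_pos_right (Real.rpow_lt_rpow hx hxy (by linarith)) hHz
    simp only [hψ]; linarith
  -- continuity
  have hφc : Continuous φ := by
    apply Continuous.sub
    apply Continuous.sub
    · exact ((continuous_pow 2).div_const 2).mul continuous_const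
    · exact (Real.continuous_rpow_const (by linarith)).mul continuous_const
    · exact ((Real.continuous_rpow_const (by linarith)).div_const ts).mul continuous_const
  have hψc : Continuous ψ := by
    apply Continuous.sub
    apply Continuous.sub
    · exact continuous_const
    · exact ((continuous_const.mul (Real.continuous_rpow_const (by linarith))).mul
        continuous_const)
    · exact (Real.continuous_rpow_const (by linarith)).mul continuous_const
  -- value of ψ at 0 is a > 0
  have hψ0 : ψ 0 = a := by
    simp only [hψ]
    rw [Real.zero_rpow (by linarith), Real.zero_rpow (by linarith)]
    ring
  -- find T with ψ T < 0
  obtain ⟨T, hT0, hTneg⟩ : ∃ T : ℝ, 0 < T ∧ ψ T < 0 := by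
    refine ⟨(a / Hz + 1) ^ (ts - 2)⁻¹, Real.rpow_pos_of_pos (by positivity) _, ?_⟩
    have hb : (0:ℝ) ≤ a / Hz + 1 := by positivity
    have key : ((a / Hz + 1) ^ (ts - 2)⁻¹) ^ (ts - 2) = a / Hz + 1 :=
      Real.rpow_inv_rpow hb (by linarith)
    simp only [hψ, key]
    have h1 : 0 ≤ q * ((a / Hz + 1) ^ (ts - 2)⁻¹) ^ (q - 2) * Qz := by
      have := Real.rpow_nonneg (Real.rpow_nonneg hb (ts - 2)⁻¹) (q - 2)
      positivity
    have h2 : a < (a / Hz + 1) * Hz := by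
      rw [add_mul, div_mul_cancel₀ _ hHz.ne']; linarith
    linarith
  -- root of ψ via IVT
  obtain ⟨tz, htzmem, htzroot⟩ : ∃ tz ∈ Icc (0:ℝ) T, ψ tz = 0 := by
    have := intermediate_value_Icc' (le_of_lt hT0) hψc.continuousOn
    have h0 : (0:ℝ) ∈ Icc (ψ T) (ψ 0) := ⟨hTneg.le, by rw [hψ0]; exact ha.le⟩
    obtain ⟨tz, h1, h2⟩ := this h0
    exact ⟨tz, h1, h2⟩
  have htz0 : 0 < tz := by
    rcases htzmem.1.lt_or_eq with h | h
    · exact h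
    · exfalso; rw [← h, hψ0] at htzroot; linarith
  -- derivative of φ
  have hder : ∀ t : ℝ, 0 < t → HasDerivAt φ (t * ψ t) t := by
    intro t ht
    have h1 : HasDerivAt (fun t : ℝ => t ^ 2 / 2 * a) (t * a) t := by
      have := ((hasDerivAt_pow 2 t).div_const 2).mul_const a
      refine this.congr_deriv ?_; norm_num
    have h2 : HasDerivAt (fun t : ℝ => t ^ q * Qz) (q * t ^ (q - 1) * Qz) t :=
      (Real.hasDerivAt_rpow_const (Or.inl ht.ne')).mul_const Qz
    have h3 : HasDerivAt (fun t : ℝ => t ^ ts / ts * Hz) (ts * t ^ (ts - 1) / ts * Hz) t :=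
      ((Real.hasDerivAt_rpow_const (Or.inl ht.ne')).div_const ts).mul_const Hz
    have := (h1.sub h2).sub h3
    refine this.congr_deriv ?_
    have e1 : t ^ (q - 1) = t * t ^ (q - 2) := by
      rw [show q - 1 = 1 + (q - 2) by ring, Real.rpow_add ht, Real.rpow_one]
    have e2 : t ^ (ts - 1) = t * t ^ (ts - 2) := by
      rw [show ts - 1 = 1 + (ts - 2) by ring, Real.rpow_add ht, Real.rpow_one]
    simp only [hψ]
    rw [e1, e2]; field_simp
  -- φ strictly increasing on [0, tz]
  have hmono : StrictMonoOn φ (Icc 0 tz) := by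
    apply strictMonoOn_of_deriv_pos (convex_Icc 0 tz) hφc.continuousOn
    intro x hx
    rw [interior_Icc] at hx
    rw [(hder x hx.1).deriv]
    have : 0 < ψ x := by
      have := hψanti x tz hx.1.le hx.2
      rw [htzroot] at this; linarith
    exact mul_pos hx.1 this
  -- φ strictly decreasing on [tz, ∞)
  have hanti : StrictAntiOn φ (Ici tz) := by
    apply strictAntiOn_of_deriv_neg (convex_Ici tz) hφc.continuousOn
    intro x hx
    rw [interior_Ici] at hx
    rw [(hder x (htz0.trans hx)).deriv]
    have : ψ x < 0 := by
      have := hψanti tz x htz0.le hx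
      rw [htzroot] at this; linarith
    exact mul_neg_of_pos_of_neg (htz0.trans hx) this
  -- strict max property
  have hstrict : ∀ t ∈ Ici (0:ℝ), t ≠ tz → φ t < φ tz := by
    intro t ht hne
    rcases lt_or_gt_of_ne hne with h | h
    · exact hmono ⟨ht, h.le⟩ ⟨htz0.le, le_refl _⟩ h
    · exact hanti (le_refl tz) (le_of_lt h) h
  refine ⟨tz, ⟨htz0, ?_, ?_, hstrict⟩, ?_⟩
  · -- Nehari equation
    have e1 : tz ^ q = tz ^ (2:ℕ) * tz ^ (q - 2) := by
      rw [← Real.rpow_natCast tz 2, ← Real.rpow_add htz0]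
      norm_num
    have e2 : tz ^ ts = tz ^ (2:ℕ) * tz ^ (ts - 2) := by
      rw [← Real.rpow_natCast tz 2, ← Real.rpow_add htz0]
      norm_num
    have : tz ^ 2 * a - q * tz ^ q * Qz - tz ^ ts * Hz = tz ^ 2 * ψ tz := by
      simp only [hψ]; rw [e1, e2]; ring
    rw [this, htzroot, mul_zero]
  · -- IsMaxOn
    rw [isMaxOn_iff]
    intro t ht
    rcases eq_or_ne t tz with rfl | hne
    · exact le_refl _
    · exact le_of_lt (hstrict t ht hne)
  · -- uniqueness
    rintro t' ⟨ht'0, _, _, ht'strict⟩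
    by_contra hne
    exact absurd (ht'strict tz htz0.le (Ne.symm hne))
      (not_lt.mpr (le_of_lt (hstrict t' ht'0.le hne)))
end

section
/- Brezis–Nirenberg type energy estimate: if ‖w_ε‖² = S + O(ε^{(N−2)/2}) and ε^{(2−N)/2}‖w_ε‖_q^q → ∞ as ε → 0⁺, then for all sufficiently small ε, (1/N)((A²+B²)/H(A,B)^{2/2*} · ‖w_ε‖²)^{N/2} − c₂‖w_ε‖_q^q < (1/N)S_H^{N/2}, where S_H = (A²+B²)S/H(A,B)^{2/2*} and c₂ > 0. -/
open Real Filter Topology Set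

lemma tangent_ineq (a b p : ℝ) (ha : 0 ≤ a) (hb : 0 ≤ b) (hp : 1 ≤ p) :
    (a + b) ^ p ≤ a ^ p + p * (a + b) ^ (p - 1) * b := by
  rcases eq_or_lt_of_le (by linarith : (0:ℝ) ≤ a + b) with h | h
  · have ha0 : a = 0 := by linarith
    have hb0 : b = 0 := by linarith
    subst ha0; subst hb0
    simp [Real.zero_rpow (by linarith : p ≠ 0)]
  · set t := a + b with ht
    have hbt : b / t ≤ 1 := by
      rw [div_le_one h]; linarith
    have hs : (-1:ℝ) ≤ -(b / t) := by linarith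
    have hber := one_add_mul_self_le_rpow_one_add hs hp
    have h1 : (1 : ℝ) + -(b / t) = a / t := by
      field_simp; ring
    rw [h1] at hber
    have h2 : (a / t) ^ p = a ^ p / t ^ p := Real.div_rpow ha h.le p
    rw [h2] at hber
    have htp : 0 < t ^ p := Real.rpow_pos_of_pos h p
    have hber' := mul_le_mul_of_nonneg_right hber htp.le
    rw [div_mul_cancel₀ _ (ne_of_gt htp)] at hber'
    have hv : p * t ^ (p - 1) * b = p * (b / t) * t ^ p := by
      rw [Real.rpow_sub h, Real.rpow_one]
      field_simp
    rw [hv]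
    nlinarith [hber']

/-- Brezis–Nirenberg type estimate: if `‖w_ε‖² = S + O(ε^{(N−2)/2})` and
`ε^{(2−N)/2}‖w_ε‖_q^q → ∞` as `ε → 0⁺`, then for all sufficiently small `ε > 0`,
`(1/N)((A²+B²)/H(A,B)^{2/2*}·‖w_ε‖²)^{N/2} − c₂‖w_ε‖_q^q < (1/N)S_H^{N/2}`,
where `S_H = (A²+B²)S/H(A,B)^{2/2*}`. Here `w2 ε = ‖w_ε‖²` and `wq ε = ‖w_ε‖_q^q`. -/
theorem stmt_12 (N : ℕ) (hN : 3 ≤ N) (ts q : ℝ) (hts : ts = 2 * N / ((N : ℝ) - 2))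
    (hq : 2 < q) (hqts : q < ts)
    (S A B HAB c₂ SH : ℝ) (hS : 0 < S) (hA : 0 < A) (hB : 0 < B) (hHAB : 0 < HAB)
    (hc₂ : 0 < c₂) (hSH : SH = (A ^ 2 + B ^ 2) * S / HAB ^ (2 / ts))
    (w2 wq : ℝ → ℝ) (hw2pos : ∀ ε > 0, 0 < w2 ε) (hwqpos : ∀ ε > 0, 0 < wq ε)
    (hO : ∃ C > 0, ∃ δ > 0, ∀ ε ∈ Ioo (0 : ℝ) δ,
      |w2 ε - S| ≤ C * ε ^ (((N : ℝ) - 2) / 2))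
    (hblow : Tendsto (fun ε : ℝ => ε ^ ((2 - (N : ℝ)) / 2) * wq ε)
      (𝓝[>] 0) atTop) :
    ∀ᶠ ε in 𝓝[>] (0 : ℝ),
      1 / N * ((A ^ 2 + B ^ 2) / HAB ^ (2 / ts) * w2 ε) ^ ((N : ℝ) / 2) - c₂ * wq ε
        < 1 / N * SH ^ ((N : ℝ) / 2) := by
  obtain ⟨C, hC, δ, hδ, hbound⟩ := hO
  have hN3 : (3:ℝ) ≤ (N:ℝ) := by exact_mod_cast hN
  have hNpos : (0:ℝ) < (N:ℝ) := by linarith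
  set k := (A ^ 2 + B ^ 2) / HAB ^ (2 / ts) with hk
  have hkpos : 0 < k := div_pos (by positivity) (Real.rpow_pos_of_pos hHAB _)
  set p := (N : ℝ) / 2 with hp
  have hp1 : 1 ≤ p := by rw [hp]; linarith
  set α := ((N : ℝ) - 2) / 2 with hα
  have hαpos : 0 < α := by rw [hα]; linarith
  have hSHk : SH = k * S := by rw [hSH, hk]; ring
  have hbase : 0 < k * S + k * C := by positivity
  set M := p * (k * S + k * C) ^ (p - 1) * (k * C) with hM
  have hMpos : 0 < M := by
    have := Real.rpow_pos_of_pos hbase (p - 1)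
    have hp0 : 0 < p := by linarith
    positivity
  set R := M / ((N:ℝ) * c₂) with hR
  have hev := hblow.eventually_gt_atTop R
  have hmem : Ioo (0:ℝ) (min δ 1) ∈ 𝓝[>] (0:ℝ) :=
    Ioo_mem_nhdsGT_of_mem ⟨le_refl 0, lt_min hδ one_pos⟩
  filter_upwards [hev, hmem] with ε h1 h2
  obtain ⟨hε0, hεlt⟩ := h2
  have hεδ : ε < δ := lt_of_lt_of_le hεlt (min_le_left _ _)
  have hε1 : ε < 1 := lt_of_lt_of_le hεlt (min_le_right _ _)
  have hεα : 0 < ε ^ α := Real.rpow_pos_of_pos hε0 _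
  have hεα1 : ε ^ α ≤ 1 := Real.rpow_le_one hε0.le hε1.le hαpos.le
  have hw2p := hw2pos ε hε0
  have hwqp := hwqpos ε hε0
  -- bound on w2
  have hb := hbound ε ⟨hε0, hεδ⟩
  have hw2 : w2 ε ≤ S + C * ε ^ α := by
    have := (abs_le.mp hb).2; linarith
  -- step 1: monotonicity of rpow
  have s1 : (k * w2 ε) ^ p ≤ (k * S + k * C * ε ^ α) ^ p := by
    have h4 := mul_le_mul_of_nonneg_left hw2 hkpos.le
    apply Real.rpow_le_rpow (by positivity) (by nlinarith [h4]) (by linarith)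
  -- step 2: tangent line inequality
  have s2 := tangent_ineq (k * S) (k * C * ε ^ α) p (by positivity) (by positivity) hp1
  -- step 3: bound the derivative factor
  have s3 : (k * S + k * C * ε ^ α) ^ (p - 1) ≤ (k * S + k * C) ^ (p - 1) := by
    have h6 : k * C * ε ^ α ≤ k * C * 1 := mul_le_mul_of_nonneg_left hεα1 (by positivity)
    apply Real.rpow_le_rpow (by positivity) (by linarith) (by linarith)
  have s4 : p * (k * S + k * C * ε ^ α) ^ (p - 1) * (k * C * ε ^ α) ≤ M * ε ^ α := by
    rw [hM]
    have hp0 : (0:ℝ) ≤ p := by linarith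
    have h7 := mul_le_mul_of_nonneg_right (mul_le_mul_of_nonneg_left s3 hp0)
      (by positivity : (0:ℝ) ≤ k * C * ε ^ α)
    have h8 : p * (k * S + k * C) ^ (p - 1) * (k * C * ε ^ α)
        = p * (k * S + k * C) ^ (p - 1) * (k * C) * ε ^ α := by ring
    linarith
  -- lower bound on wq
  have hneg : (2 - (N : ℝ)) / 2 = -α := by rw [hα]; ring
  have hinv : ε ^ ((2 - (N : ℝ)) / 2) = (ε ^ α)⁻¹ := by
    rw [hneg, Real.rpow_neg hε0.le]
  rw [hinv] at h1
  have hwq : R * ε ^ α < wq ε := by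
    have h9 := mul_lt_mul_of_pos_right h1 hεα
    have h10 : (ε ^ α)⁻¹ * wq ε * ε ^ α = wq ε := by field_simp
    rwa [h10] at h9
  have hRc : c₂ * (R * ε ^ α) = M * ε ^ α / N := by
    rw [hR]; field_simp
  have hwq2 : M * ε ^ α / N < c₂ * wq ε := by
    rw [← hRc]
    exact mul_lt_mul_of_pos_left hwq hc₂
  -- combine
  rw [hSHk]
  have hchain : (k * w2 ε) ^ p ≤ (k * S) ^ p + M * ε ^ α := by
    calc (k * w2 ε) ^ p ≤ (k * S + k * C * ε ^ α) ^ p := s1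
      _ ≤ (k * S) ^ p + p * (k * S + k * C * ε ^ α) ^ (p - 1) * (k * C * ε ^ α) := s2
      _ ≤ (k * S) ^ p + M * ε ^ α := by linarith
  have hNinv : (0:ℝ) < 1 / N := by positivity
  have := mul_le_mul_of_nonneg_left hchain hNinv.le
  have hexp : 1 / (N:ℝ) * ((k * S) ^ p + M * ε ^ α)
      = 1 / N * (k * S) ^ p + M * ε ^ α / N := by ring
  rw [hexp] at this
  linarith
end
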